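/- arXiv:1601.07005 — 6 statements merged into one kernel-verified Lean document; each statement's English description precedes it below -/
import Mathlib

section
/- Let {R_e, D_A, f_e} be a G-branching system on a σ-finite measure space (X, μ) for an ultragraph G. For each e ∈ 𝒢¹ define an operator S_e on L²(X, μ) by S_e(φ) = Φ_{f_e⁻¹}^{1/2} · (φ ∘ f_e⁻¹) (extended by zero off R_e). Then S_e is a bounded operator on L²(X, μ) that is a partial isometry, and its adjoint is given by S_e*(φ) = Φ_{f_e}^{1/2} · (φ ∘ f_e) (extended by zero off D_{r(e)}). Moreover S_e S_e* is multiplication by χ_{R_e} and S_e* S_e is multiplication by χ_{D_{r(e)}}. -/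
open MeasureTheory Filter Set
open scoped ENNReal

universe u v w

structure Ultragraph (V : Type u) (E : Type v) where
  s : E → V
  r : E → Set V
  r_nonempty : ∀ e, (r e).Nonempty

namespace Ultragraph

variable {V : Type u} {E : Type v}

/-- The lattice `𝒢⁰` of Tomforde (with `∅` included, so that `p_∅ = 0` makes sense). -/
inductive InG0 (G : Ultragraph V E) : Set V → Prop
  | empty : InG0 G ∅
  | singleton (v : V) : InG0 G {v}
  | range (e : E) : InG0 G (G.r e)
  | union {A B : Set V} : InG0 G A → InG0 G B → InG0 G (A ∪ B)
  | inter {A B : Set V} : InG0 G A → InG0 G B → InG0 G (A ∩ B)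

/-- A `G`-branching system on a measure space `(X, μ)`. -/
structure BranchingSystem (G : Ultragraph V E) (X : Type w) [MeasurableSpace X]
    (μ : Measure X) where
  R : E → Set X
  D : Set V → Set X
  f : E → X → X
  finv : E → X → X
  measurableSet_R : ∀ e, MeasurableSet (R e)
  measurableSet_D : ∀ A, G.InG0 A → MeasurableSet (D A)
  ae_disjoint : ∀ e e', e ≠ e' → μ (R e ∩ R e') = 0
  D_empty : D ∅ = ∅
  D_inter : ∀ A B, G.InG0 A → G.InG0 B → (D A ∩ D B : Set X) =ᵐ[μ] (D (A ∩ B) : Set X)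
  D_union : ∀ A B, G.InG0 A → G.InG0 B → (D A ∪ D B : Set X) =ᵐ[μ] (D (A ∪ B) : Set X)
  R_subset_D : ∀ e, μ (R e \ D {G.s e}) = 0
  D_eq_iUnion : ∀ v, {e | G.s e = v}.Finite → {e | G.s e = v}.Nonempty →
    (D {v} : Set X) =ᵐ[μ] (⋃ e ∈ {e | G.s e = v}, R e : Set X)
  measurable_f : ∀ e, Measurable (f e)
  measurable_finv : ∀ e, Measurable (finv e)
  mapsTo_f : ∀ e, Set.MapsTo (f e) (D (G.r e)) (R e)
  mapsTo_finv : ∀ e, Set.MapsTo (finv e) (R e) (D (G.r e))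
  f_finv : ∀ e, ∀ᵐ x ∂(μ.restrict (R e)), f e (finv e x) = x
  finv_f : ∀ e, ∀ᵐ x ∂(μ.restrict (D (G.r e))), finv e (f e x) = x
  pushforward_f_ac : ∀ e, (μ.restrict (R e)).map (finv e) ≪ μ.restrict (D (G.r e))
  pushforward_finv_ac : ∀ e, (μ.restrict (D (G.r e))).map (f e) ≪ μ.restrict (R e)

variable {G : Ultragraph V E} {X : Type w} [MeasurableSpace X] {μ : Measure X}

/-- `Φ_{f_e} = d(μ ∘ f_e)/dμ` (where `μ ∘ f_e` is the pushforward of `μ|_{R_e}` by `f_e⁻¹`). -/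
noncomputable def BranchingSystem.PhiF (B : BranchingSystem G X μ) (e : E) : X → ℝ≥0∞ :=
  ((μ.restrict (B.R e)).map (B.finv e)).rnDeriv μ

/-- `Φ_{f_e⁻¹} = d(μ ∘ f_e⁻¹)/dμ`. -/
noncomputable def BranchingSystem.PhiFinv (B : BranchingSystem G X μ) (e : E) : X → ℝ≥0∞ :=
  ((μ.restrict (B.D (G.r e))).map (B.f e)).rnDeriv μ

/-- `S_e φ = Φ_{f_e⁻¹}^{1/2} ⬝ (φ ∘ f_e⁻¹)`, extended by zero off `R_e`. -/
noncomputable def BranchingSystem.SFun (B : BranchingSystem G X μ) (e : E) (φ : X → ℂ) :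
    X → ℂ :=
  (B.R e).indicator fun x => (Real.sqrt ((B.PhiFinv e x).toReal) : ℂ) * φ (B.finv e x)

/-- `S_e^* φ = Φ_{f_e}^{1/2} ⬝ (φ ∘ f_e)`, extended by zero off `D_{r(e)}`. -/
noncomputable def BranchingSystem.SStarFun (B : BranchingSystem G X μ) (e : E) (φ : X → ℂ) :
    X → ℂ :=
  (B.D (G.r e)).indicator fun x => (Real.sqrt ((B.PhiF e x).toReal) : ℂ) * φ (B.f e x)

/-- `f_α = f_{α₁} ∘ ⋯ ∘ f_{αₙ}` for a path `α`. -/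
def BranchingSystem.fPath (B : BranchingSystem G X μ) :
    ∀ k : ℕ, (Fin (k + 1) → E) → X → X
  | 0, α => B.f (α 0)
  | k + 1, α => B.f (α 0) ∘ BranchingSystem.fPath B k fun i => α i.succ

/-- A Cuntz–Krieger `G`-family in a star ring. -/
structure CKFamily (G : Ultragraph V E) (A : Type w) [NonUnitalRing A] [StarRing A] where
  P : Set V → A
  S : E → A
  P_empty : P ∅ = 0
  P_star : ∀ B, G.InG0 B → star (P B) = P B
  P_mul : ∀ B C, G.InG0 B → G.InG0 C → P B * P C = P (B ∩ C)
  P_union : ∀ B C, G.InG0 B → G.InG0 C → P (B ∪ C) = P B + P C - P (B ∩ C)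
  S_orth : ∀ e e', e ≠ e' → star (S e) * S e' = 0
  S_star_mul : ∀ e, star (S e) * S e = P (G.r e)
  S_le : ∀ e, P {G.s e} * (S e * star (S e)) = S e * star (S e)
  CK : ∀ v, (h : {e | G.s e = v}.Finite) → {e | G.s e = v}.Nonempty →
    P {v} = ∑ e ∈ h.toFinset, S e * star (S e)

/-- `s_α = s_{α₁} ⋯ s_{αₙ}` for a path `α`. -/
def CKFamily.sPath {A : Type w} [NonUnitalRing A] [StarRing A] (F : CKFamily G A) :
    ∀ k : ℕ, (Fin (k + 1) → E) → A
  | 0, α => F.S (α 0)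
  | k + 1, α => F.S (α 0) * CKFamily.sPath F k fun i => α i.succ

def IsPath (G : Ultragraph V E) {k : ℕ} (α : Fin (k + 1) → E) : Prop :=
  ∀ i : Fin k, G.s (α i.succ) ∈ G.r (α i.castSucc)

def IsCycle (G : Ultragraph V E) {k : ℕ} (α : Fin (k + 1) → E) : Prop :=
  IsPath G α ∧ G.s (α 0) ∈ G.r (α (Fin.last k))

/-- A simple cycle without exits: a cycle with pairwise distinct edges such that each
`r(αᵢ)` is a singleton and `s⁻¹(s(αᵢ)) = {αᵢ}`. -/
def IsSimpleCycleNoExits (G : Ultragraph V E) {k : ℕ} (α : Fin (k + 1) → E) : Prop :=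
  IsCycle G α ∧ Function.Injective α ∧
    ∀ i, (∃ w, G.r (α i) = {w}) ∧ ∀ e, G.s e = G.s (α i) → e = α i

def HasExit (G : Ultragraph V E) {k : ℕ} (α : Fin (k + 1) → E) : Prop :=
  (∃ i : Fin k, {e | G.s e ∈ G.r (α i.castSucc)} ≠ {α i.succ}) ∨
  {e | G.s e ∈ G.r (α (Fin.last k))} ≠ {α 0} ∨
  ∃ i, ∃ v ∈ G.r (α i), ∀ e, G.s e ≠ v

def ConditionL (G : Ultragraph V E) : Prop :=
  ∀ (k : ℕ) (α : Fin (k + 1) → E), IsCycle G α → HasExit G α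

def Hereditary (G : Ultragraph V E) (H : Set (Set V)) : Prop :=
  (∀ A ∈ H, G.InG0 A) ∧ (∀ A ∈ H, ∀ B ∈ H, A ∪ B ∈ H) ∧
  (∀ A ∈ H, ∀ B, G.InG0 B → B ⊆ A → B ∈ H) ∧
  ∀ e, {G.s e} ∈ H → G.r e ∈ H

def Saturated (G : Ultragraph V E) (T : Set (Set V)) : Prop :=
  ∀ v, {e | G.s e = v}.Finite → {e | G.s e = v}.Nonempty →
    (∀ e, G.s e = v → G.r e ∈ T) → {v} ∈ T

end Ultragraph

/-- A closed two-sided (complex) ideal, as a subset. -/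
def IsClosedTwoSidedIdealIn (A : Type w) [NonUnitalNormedRing A] [Module ℂ A]
    (J : Set A) : Prop :=
  IsClosed J ∧ (0 : A) ∈ J ∧ (∀ x ∈ J, ∀ y ∈ J, x + y ∈ J) ∧
    (∀ (c : ℂ), ∀ x ∈ J, c • x ∈ J) ∧ ∀ x ∈ J, ∀ a, a * x ∈ J ∧ x * a ∈ J

/-- The smallest closed two-sided ideal containing `s`. -/
def idealGeneratedBy {A : Type w} [NonUnitalNormedRing A] [Module ℂ A] (s : Set A) : Set A :=
  ⋂₀ {J | IsClosedTwoSidedIdealIn A J ∧ s ⊆ J}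

namespace Ultragraph

/-- A model of the ultragraph C*-algebra `C*(G)`: a C*-algebra generated by a universal
Cuntz–Krieger `G`-family, together with its gauge action. -/
structure UltragraphCStarAlgebra (G : Ultragraph V E) (A : Type w)
    [NonUnitalNormedRing A] [StarRing A] [CStarRing A] [NormedSpace ℂ A]
    [IsScalarTower ℂ A A] [SMulCommClass ℂ A A] [StarModule ℂ A] [CompleteSpace A] where
  fam : CKFamily G A
  P_ne_zero : ∀ B, G.InG0 B → B.Nonempty → fam.P B ≠ 0
  generates : ∀ C : Set A, IsClosed C →
    (∀ x ∈ C, ∀ y ∈ C, x + y ∈ C) → (∀ x ∈ C, ∀ y ∈ C, x * y ∈ C) →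
    (∀ (c : ℂ), ∀ x ∈ C, c • x ∈ C) → (∀ x ∈ C, star x ∈ C) →
    (∀ B, G.InG0 B → fam.P B ∈ C) → (∀ e, fam.S e ∈ C) → ∀ x, x ∈ C
  gauge : ∀ z : ℂ, ‖z‖ = 1 → A ≃⋆ₐ[ℂ] A
  gauge_P : ∀ z hz B, G.InG0 B → gauge z hz (fam.P B) = fam.P B
  gauge_S : ∀ z hz e, gauge z hz (fam.S e) = z • fam.S e
  universal : ∀ (B : Type w) [NonUnitalNormedRing B] [StarRing B] [CStarRing B]
    [NormedSpace ℂ B] [IsScalarTower ℂ B B] [SMulCommClass ℂ B B] [StarModule ℂ B]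
    [CompleteSpace B], ∀ F : CKFamily G B,
    ∃ φ : A →⋆ₙₐ[ℂ] B, Continuous φ ∧
      (∀ C, G.InG0 C → φ (fam.P C) = F.P C) ∧ ∀ e, φ (fam.S e) = F.S e

end Ultragraph

namespace UGAux

variable {X : Type*} [MeasurableSpace X]

/-- The Radon–Nikodym derivative of the pushforward of `μ.restrict Ds` by `f`. -/
noncomputable def UGPhi (μ : Measure X) (f : X → X) (Ds : Set X) : X → ℝ≥0∞ :=
  ((μ.restrict Ds).map f).rnDeriv μ

/-- The weighted composition operator at the level of functions. -/
noncomputable def UGop (μ : Measure X) (f g : X → X) (Rs Ds : Set X) (φ : X → ℂ) : X → ℂ :=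
  Rs.indicator fun x => (Real.sqrt ((UGPhi μ f Ds x).toReal) : ℂ) * φ (g x)

/-- Hypotheses of an abstract "branching" pair. -/
structure UGHyp (μ : Measure X) (f g : X → X) (Rs Ds : Set X) : Prop where
  hf : Measurable f
  hg : Measurable g
  hR : MeasurableSet Rs
  hD : MeasurableSet Ds
  mf : Set.MapsTo f Ds Rs
  mg : Set.MapsTo g Rs Ds
  fg : ∀ᵐ x ∂μ.restrict Rs, f (g x) = x
  gf : ∀ᵐ x ∂μ.restrict Ds, g (f x) = x
  ac1 : (μ.restrict Ds).map f ≪ μ.restrict Rs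
  ac2 : (μ.restrict Rs).map g ≪ μ.restrict Ds

variable {μ : Measure X} {f g : X → X} {Rs Ds : Set X}

private lemma ae_nmem {μ : Measure X} {s : Set X} (h : μ s = 0) : ∀ᵐ x ∂μ, x ∉ s := by
  have he : {x | ¬ x ∉ s} = s := by ext x; simp
  rw [ae_iff, he]; exact h

private lemma measure_zero_of_ae_nmem {μ : Measure X} {s : Set X} (h : ∀ᵐ x ∂μ, x ∉ s) :
    μ s = 0 := by
  have he : {x | ¬ x ∉ s} = s := by ext x; simp
  have h2 := ae_iff.mp h
  rwa [he] at h2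

lemma UGHyp.symm (h : UGHyp μ f g Rs Ds) : UGHyp μ g f Ds Rs :=
  ⟨h.hg, h.hf, h.hD, h.hR, h.mg, h.mf, h.gf, h.fg, h.ac2, h.ac1⟩

lemma measurable_UGPhi : Measurable (UGPhi μ f Ds) :=
  Measure.measurable_rnDeriv _ _

lemma UGHyp.sf_nu [SigmaFinite μ] (h : UGHyp μ f g Rs Ds) :
    SigmaFinite ((μ.restrict Ds).map f) := by
  refine ⟨⟨⟨fun n => g ⁻¹' (spanningSets μ n), fun _ => trivial, fun n => ?_, ?_⟩⟩⟩
  · rw [Measure.map_apply h.hf (h.hg (measurableSet_spanningSets μ n))]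
    have hle : μ.restrict Ds (f ⁻¹' (g ⁻¹' spanningSets μ n)) ≤
        μ.restrict Ds (spanningSets μ n) := by
      refine measure_mono_ae (h.gf.mono fun x hx => ?_)
      intro hmem
      have h2 : g (f x) ∈ spanningSets μ n := hmem
      show x ∈ spanningSets μ n
      rwa [hx] at h2
    exact lt_of_le_of_lt (hle.trans (Measure.restrict_le_self _))
      (measure_spanningSets_lt_top μ n)
  · rw [← Set.preimage_iUnion, iUnion_spanningSets, Set.preimage_univ]

lemma UGHyp.nu_ac (h : UGHyp μ f g Rs Ds) : (μ.restrict Ds).map f ≪ μ :=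
  h.ac1.trans (Measure.absolutelyContinuous_of_le Measure.restrict_le_self)

lemma UGHyp.withDensity_phi [SigmaFinite μ] (h : UGHyp μ f g Rs Ds) :
    μ.withDensity (UGPhi μ f Ds) = (μ.restrict Ds).map f := by
  haveI := h.sf_nu
  exact Measure.withDensity_rnDeriv_eq _ _ h.nu_ac

lemma UGHyp.phi_lt_top [SigmaFinite μ] (h : UGHyp μ f g Rs Ds) :
    ∀ᵐ x ∂μ, UGPhi μ f Ds x < ∞ := by
  haveI := h.sf_nu
  exact Measure.rnDeriv_lt_top _ _

lemma UGHyp.lint_phi [SigmaFinite μ] (h : UGHyp μ f g Rs Ds) {k : X → ℝ≥0∞}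
    (hk : Measurable k) :
    ∫⁻ x, UGPhi μ f Ds x * k x ∂μ = ∫⁻ x in Ds, k (f x) ∂μ := by
  have h1 := lintegral_withDensity_eq_lintegral_mul μ
    (measurable_UGPhi (μ := μ) (f := f) (Ds := Ds)) hk
  simp only [Pi.mul_apply] at h1
  rw [← h1, h.withDensity_phi, lintegral_map hk h.hf]

lemma UGHyp.phi_zero_off [SigmaFinite μ] (h : UGHyp μ f g Rs Ds) :
    ∀ᵐ x ∂μ, x ∉ Rs → UGPhi μ f Ds x = 0 := by
  have hν : ((μ.restrict Ds).map f) Rsᶜ = 0 :=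
    h.ac1 (by simp [Measure.restrict_apply h.hR.compl])
  have h0 : ∫⁻ x in Rsᶜ, UGPhi μ f Ds x ∂μ = 0 := by
    rw [← withDensity_apply _ h.hR.compl, h.withDensity_phi]; exact hν
  have h1 := (setLIntegral_eq_zero_iff h.hR.compl measurable_UGPhi).mp h0
  exact h1.mono fun x hx hmem => hx hmem

lemma UGHyp.restrict_ac (h : UGHyp μ f g Rs Ds) :
    μ.restrict Rs ≪ (μ.restrict Ds).map f := by
  refine Measure.AbsolutelyContinuous.mk fun s hs hνs => ?_
  have h1 : μ.restrict Ds (f ⁻¹' s) = 0 := by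
    rwa [Measure.map_apply h.hf hs] at hνs
  have h2 : (μ.restrict Rs).map g (f ⁻¹' s) = 0 := h.ac2 h1
  have h3 : μ.restrict Rs (g ⁻¹' (f ⁻¹' s)) = 0 := by
    rwa [Measure.map_apply h.hg (h.hf hs)] at h2
  have h4 : ∀ᵐ x ∂μ.restrict Rs, f (g x) ∉ s :=
    (ae_nmem h3).mono fun x hx hmem => hx hmem
  have h5 : ∀ᵐ x ∂μ.restrict Rs, x ∉ s :=
    (h4.and h.fg).mono fun x ⟨hx1, hx2⟩ => hx2 ▸ hx1
  exact measure_zero_of_ae_nmem h5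

lemma UGHyp.phi_pos [SigmaFinite μ] (h : UGHyp μ f g Rs Ds) :
    ∀ᵐ x ∂μ, x ∈ Rs → UGPhi μ f Ds x ≠ 0 := by
  set Z := {x | UGPhi μ f Ds x = 0} with hZdef
  have hZm : MeasurableSet Z := measurable_UGPhi (measurableSet_singleton 0)
  have hν : ((μ.restrict Ds).map f) Z = 0 := by
    rw [← h.withDensity_phi, withDensity_apply _ hZm]
    have : ∀ᵐ x ∂μ.restrict Z, UGPhi μ f Ds x = 0 :=
      ae_restrict_of_forall_mem hZm fun x hx => hx
    rw [setLIntegral_congr_fun hZm (fun x hx => hx)]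
    simp
  have hz : μ.restrict Rs Z = 0 := h.restrict_ac hν
  exact ae_imp_of_ae_restrict (ae_nmem hz)

lemma UGHyp.pull_null (h : UGHyp μ f g Rs Ds) {N : Set X} (hN : μ N = 0) :
    ∀ᵐ x ∂μ, x ∈ Rs → g x ∉ N := by
  obtain ⟨N', hNN', hN'm, hN'0⟩ := exists_measurable_superset_of_null hN
  have h0 : μ.restrict Ds N' = 0 := by
    rw [Measure.restrict_apply hN'm]
    exact measure_mono_null Set.inter_subset_left hN'0
  have h1 : (μ.restrict Rs).map g N' = 0 := h.ac2 h0
  have h2 : μ.restrict Rs (g ⁻¹' N') = 0 := by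
    rwa [Measure.map_apply h.hg hN'm] at h1
  have h3 : ∀ᵐ x ∂μ.restrict Rs, g x ∉ N' :=
    (ae_nmem h2).mono fun x hx hmem => hx hmem
  exact ae_imp_of_ae_restrict (h3.mono fun x hx hmem => hx (hNN' hmem))

lemma UGHyp.op_congr (h : UGHyp μ f g Rs Ds) {φ ψ : X → ℂ} (hφψ : φ =ᵐ[μ] ψ) :
    UGop μ f g Rs Ds φ =ᵐ[μ] UGop μ f g Rs Ds ψ := by
  have hN : μ {x | ¬ φ x = ψ x} = 0 := ae_iff.mp hφψ
  filter_upwards [h.pull_null hN] with x hx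
  unfold UGop
  by_cases hxR : x ∈ Rs
  · rw [Set.indicator_of_mem hxR, Set.indicator_of_mem hxR]
    have := hx hxR
    have heq : φ (g x) = ψ (g x) := by
      by_contra hne; exact this hne
    rw [heq]
  · rw [Set.indicator_of_notMem hxR, Set.indicator_of_notMem hxR]

lemma UGHyp.measurable_op (h : UGHyp μ f g Rs Ds) {φ : X → ℂ} (hφ : Measurable φ) :
    Measurable (UGop μ f g Rs Ds φ) := by
  unfold UGop
  refine Measurable.indicator ?_ h.hR
  exact (Complex.measurable_ofReal.comp
    (measurable_UGPhi.ennreal_toReal.sqrt)).mul (hφ.comp h.hg)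

lemma UGHyp.lint_op_sq [SigmaFinite μ] (h : UGHyp μ f g Rs Ds) {φ : X → ℂ}
    (hφ : Measurable φ) :
    ∫⁻ x, (‖UGop μ f g Rs Ds φ x‖₊ : ℝ≥0∞) ^ (2 : ℝ) ∂μ
      = ∫⁻ x in Ds, (‖φ x‖₊ : ℝ≥0∞) ^ (2 : ℝ) ∂μ := by
  have step1 : (fun x => (‖UGop μ f g Rs Ds φ x‖₊ : ℝ≥0∞) ^ (2 : ℝ)) =ᵐ[μ]
      fun x => UGPhi μ f Ds x * (‖φ (g x)‖₊ : ℝ≥0∞) ^ (2 : ℝ) := by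
    filter_upwards [h.phi_lt_top, h.phi_zero_off] with x hlt h0
    by_cases hxR : x ∈ Rs
    · rw [UGop, Set.indicator_of_mem hxR]
      have hs : (0:ℝ) ≤ Real.sqrt ((UGPhi μ f Ds x).toReal) := Real.sqrt_nonneg _
      rw [nnnorm_mul, ENNReal.coe_mul, ENNReal.mul_rpow_of_nonneg _ _ (by norm_num)]
      congr 1
      have h1 : (‖((Real.sqrt ((UGPhi μ f Ds x).toReal) : ℝ) : ℂ)‖₊ : ℝ≥0∞)
          = ENNReal.ofReal (Real.sqrt ((UGPhi μ f Ds x).toReal)) := by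
        rw [← enorm_eq_nnnorm, ← ofReal_norm, Complex.norm_real,
          Real.norm_of_nonneg hs]
      rw [h1, ENNReal.ofReal_rpow_of_nonneg hs (by norm_num : (0:ℝ) ≤ 2)]
      rw [show ((2:ℝ)) = ((2:ℕ):ℝ) by norm_num, Real.rpow_natCast]
      rw [Real.sq_sqrt ENNReal.toReal_nonneg, ENNReal.ofReal_toReal hlt.ne]
    · rw [UGop, Set.indicator_of_notMem hxR, h0 hxR, zero_mul]
      simp
  rw [lintegral_congr_ae step1]
  rw [h.lint_phi (k := fun y => (‖φ (g y)‖₊ : ℝ≥0∞) ^ (2:ℝ))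
    ((hφ.comp h.hg).nnnorm.coe_nnreal_ennreal.pow_const _)]
  refine lintegral_congr_ae (h.gf.mono fun x hx => ?_)
  simp only []
  rw [hx]

lemma UGHyp.eLpNorm_op_le [SigmaFinite μ] (h : UGHyp μ f g Rs Ds) {φ : X → ℂ}
    (hφ : Measurable φ) :
    eLpNorm (UGop μ f g Rs Ds φ) 2 μ ≤ eLpNorm φ 2 μ := by
  rw [eLpNorm_eq_lintegral_rpow_enorm_toReal two_ne_zero ENNReal.ofNat_ne_top,
    eLpNorm_eq_lintegral_rpow_enorm_toReal two_ne_zero ENNReal.ofNat_ne_top]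
  simp only [ENNReal.toReal_ofNat, enorm_eq_nnnorm]
  refine ENNReal.rpow_le_rpow ?_ (by norm_num)
  rw [h.lint_op_sq hφ]
  exact setLIntegral_le_lintegral _ _

lemma UGHyp.memℒp_op [SigmaFinite μ] (h : UGHyp μ f g Rs Ds) {φ : X → ℂ}
    (hφ : Measurable φ) (hφ2 : MemLp φ 2 μ) : MemLp (UGop μ f g Rs Ds φ) 2 μ :=
  ⟨(h.measurable_op hφ).stronglyMeasurable.aestronglyMeasurable,
    lt_of_le_of_lt (h.eLpNorm_op_le hφ) hφ2.2⟩

lemma UGHyp.chain [SigmaFinite μ] (h : UGHyp μ f g Rs Ds) :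
    ∀ᵐ y ∂μ, y ∈ Ds → UGPhi μ f Ds (f y) * UGPhi μ g Rs y = 1 := by
  have hΦm : Measurable (UGPhi μ f Ds) := measurable_UGPhi
  have hΨm : Measurable (UGPhi μ g Rs) := measurable_UGPhi
  have hkm : Measurable (fun y => UGPhi μ f Ds (f y) * UGPhi μ g Rs y) :=
    (hΦm.comp h.hf).mul hΨm
  have key : (μ.restrict Ds).withDensity (fun y => UGPhi μ f Ds (f y) * UGPhi μ g Rs y)
      = μ.restrict Ds := by
    ext s hs
    rw [withDensity_apply _ hs, Measure.restrict_restrict hs, Measure.restrict_apply hs]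
    have hsD : MeasurableSet (s ∩ Ds) := hs.inter h.hD
    rw [← lintegral_indicator hsD]
    have e1 : (fun y => (s ∩ Ds).indicator (fun y => UGPhi μ f Ds (f y) * UGPhi μ g Rs y) y)
        = fun y => UGPhi μ g Rs y
            * ((s ∩ Ds).indicator (fun z => UGPhi μ f Ds (f z)) y) := by
      funext y
      by_cases hy : y ∈ s ∩ Ds
      · rw [Set.indicator_of_mem hy, Set.indicator_of_mem hy, mul_comm]
      · rw [Set.indicator_of_notMem hy, Set.indicator_of_notMem hy, mul_zero]
    rw [e1, h.symm.lint_phi (k := (s ∩ Ds).indicator (fun z => UGPhi μ f Ds (f z)))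
      ((hΦm.comp h.hf).indicator hsD)]
    have e2 : ∀ᵐ x ∂μ.restrict Rs, (s ∩ Ds).indicator (fun z => UGPhi μ f Ds (f z)) (g x)
        = (s ∩ Ds).indicator (fun _ => (1:ℝ≥0∞)) (g x) * UGPhi μ f Ds x := by
      filter_upwards [h.fg] with x hx
      by_cases hgx : g x ∈ s ∩ Ds
      · rw [Set.indicator_of_mem hgx, Set.indicator_of_mem hgx, hx, one_mul]
      · rw [Set.indicator_of_notMem hgx, Set.indicator_of_notMem hgx, zero_mul]
    rw [lintegral_congr_ae e2]
    have e3 : ∫⁻ x in Rs, (s ∩ Ds).indicator (fun _ => (1:ℝ≥0∞)) (g x) * UGPhi μ f Ds x ∂μ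
        = ∫⁻ x, UGPhi μ f Ds x * (s ∩ Ds).indicator (fun _ => (1:ℝ≥0∞)) (g x) ∂μ := by
      rw [← lintegral_indicator h.hR]
      refine lintegral_congr_ae ?_
      filter_upwards [h.phi_zero_off] with x h0
      by_cases hxR : x ∈ Rs
      · rw [Set.indicator_of_mem hxR, mul_comm]
      · rw [Set.indicator_of_notMem hxR, h0 hxR, zero_mul]
    rw [e3, h.lint_phi (k := fun x => (s ∩ Ds).indicator (fun _ => (1:ℝ≥0∞)) (g x))
      ((measurable_const.indicator hsD).comp h.hg)]
    have e4 : ∀ᵐ y ∂μ.restrict Ds, (s ∩ Ds).indicator (fun _ => (1:ℝ≥0∞)) (g (f y))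
        = (s ∩ Ds).indicator (fun _ => (1:ℝ≥0∞)) y := by
      filter_upwards [h.gf] with y hy
      rw [hy]
    rw [lintegral_congr_ae e4, lintegral_indicator hsD]
    rw [setLIntegral_one, Measure.restrict_apply hsD, Set.inter_assoc, Set.inter_self]
  have h1 : (fun y => UGPhi μ f Ds (f y) * UGPhi μ g Rs y) =ᵐ[μ.restrict Ds] fun _ => 1 := by
    have h2 := Measure.rnDeriv_withDensity (μ.restrict Ds) hkm
    rw [key] at h2
    exact h2.symm.trans (Measure.rnDeriv_self _)
  exact ae_imp_of_ae_restrict h1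

lemma UGHyp.sqrt_chain [SigmaFinite μ] (h : UGHyp μ f g Rs Ds) :
    ∀ᵐ y ∂μ, y ∈ Ds →
      Real.sqrt ((UGPhi μ g Rs y).toReal) * Real.sqrt ((UGPhi μ f Ds (f y)).toReal) = 1 := by
  filter_upwards [h.chain, h.symm.phi_lt_top] with y hc hlt hy
  have hc1 := hc hy
  have hΨne : UGPhi μ g Rs y ≠ 0 := by
    intro h0
    rw [h0, mul_zero] at hc1
    exact zero_ne_one hc1
  have hΦne : UGPhi μ f Ds (f y) ≠ ∞ := by
    intro h0
    rw [h0, ENNReal.top_mul hΨne] at hc1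
    exact (ENNReal.top_ne_one) hc1
  have ht : (UGPhi μ f Ds (f y)).toReal * (UGPhi μ g Rs y).toReal = 1 := by
    rw [← ENNReal.toReal_mul, hc1, ENNReal.toReal_one]
  rw [← Real.sqrt_mul ENNReal.toReal_nonneg, mul_comm ((UGPhi μ g Rs y).toReal), ht,
    Real.sqrt_one]

lemma UGHyp.weight_chain [SigmaFinite μ] (h : UGHyp μ f g Rs Ds) :
    ∀ᵐ y ∂μ, y ∈ Ds →
      (UGPhi μ g Rs y).toReal * Real.sqrt ((UGPhi μ f Ds (f y)).toReal)
        = Real.sqrt ((UGPhi μ g Rs y).toReal) := by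
  filter_upwards [h.sqrt_chain] with y hs hy
  have h1 : Real.sqrt ((UGPhi μ g Rs y).toReal) * Real.sqrt ((UGPhi μ g Rs y).toReal)
      = (UGPhi μ g Rs y).toReal := Real.mul_self_sqrt ENNReal.toReal_nonneg
  calc (UGPhi μ g Rs y).toReal * Real.sqrt ((UGPhi μ f Ds (f y)).toReal)
      = Real.sqrt ((UGPhi μ g Rs y).toReal)
        * (Real.sqrt ((UGPhi μ g Rs y).toReal)
          * Real.sqrt ((UGPhi μ f Ds (f y)).toReal)) := by rw [← mul_assoc, h1]
    _ = Real.sqrt ((UGPhi μ g Rs y).toReal) := by rw [hs hy, mul_one]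

lemma UGHyp.op_op [SigmaFinite μ] (h : UGHyp μ f g Rs Ds) (φ : X → ℂ) :
    UGop μ g f Ds Rs (UGop μ f g Rs Ds φ) =ᵐ[μ] Ds.indicator φ := by
  filter_upwards [h.sqrt_chain, ae_imp_of_ae_restrict h.gf] with y hchain hgf
  by_cases hy : y ∈ Ds
  · rw [UGop, Set.indicator_of_mem hy, Set.indicator_of_mem hy]
    have hfy : f y ∈ Rs := h.mf hy
    rw [UGop, Set.indicator_of_mem hfy, hgf hy, ← mul_assoc, ← Complex.ofReal_mul,
      hchain hy, Complex.ofReal_one, one_mul]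
  · rw [UGop, Set.indicator_of_notMem hy, Set.indicator_of_notMem hy]

lemma UGHyp.integral_op [SigmaFinite μ] (h : UGHyp μ f g Rs Ds) {φ ψ : X → ℂ}
    (hφ : Measurable φ) (hψ : Measurable ψ) :
    ∫ x, (starRingEnd ℂ) (UGop μ f g Rs Ds φ x) * ψ x ∂μ
      = ∫ y, (starRingEnd ℂ) (φ y) * UGop μ g f Ds Rs ψ y ∂μ := by
  have hKm : Measurable (fun y => (Real.sqrt ((UGPhi μ f Ds (f y)).toReal) : ℂ)
      * ((starRingEnd ℂ) (φ y) * ψ (f y))) := by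
    refine Measurable.mul ?_ ?_
    · exact Complex.measurable_ofReal.comp
        ((measurable_UGPhi.comp h.hf).ennreal_toReal.sqrt)
    · exact ((continuous_star.measurable.comp hφ).mul (hψ.comp h.hf))
  have step1 : ∫ x, (starRingEnd ℂ) (UGop μ f g Rs Ds φ x) * ψ x ∂μ
      = ∫ x in Rs, (Real.sqrt ((UGPhi μ f Ds (f (g x))).toReal) : ℂ)
          * ((starRingEnd ℂ) (φ (g x)) * ψ (f (g x))) ∂μ := by
    rw [← integral_indicator h.hR]
    refine integral_congr_ae ?_
    filter_upwards [ae_imp_of_ae_restrict h.fg] with x hx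
    by_cases hxR : x ∈ Rs
    · rw [UGop, Set.indicator_of_mem hxR, Set.indicator_of_mem hxR, hx hxR,
        map_mul, Complex.conj_ofReal]
      ring
    · rw [UGop, Set.indicator_of_notMem hxR, Set.indicator_of_notMem hxR,
        map_zero, zero_mul]
  have step2 : ∫ x in Rs, (Real.sqrt ((UGPhi μ f Ds (f (g x))).toReal) : ℂ)
          * ((starRingEnd ℂ) (φ (g x)) * ψ (f (g x))) ∂μ
      = ∫ y, (Real.sqrt ((UGPhi μ f Ds (f y)).toReal) : ℂ)
          * ((starRingEnd ℂ) (φ y) * ψ (f y)) ∂((μ.restrict Rs).map g) :=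
    (integral_map h.hg.aemeasurable hKm.stronglyMeasurable.aestronglyMeasurable).symm
  have step3 : ∫ y, (Real.sqrt ((UGPhi μ f Ds (f y)).toReal) : ℂ)
          * ((starRingEnd ℂ) (φ y) * ψ (f y)) ∂((μ.restrict Rs).map g)
      = ∫ y, (UGPhi μ g Rs y).toReal • ((Real.sqrt ((UGPhi μ f Ds (f y)).toReal) : ℂ)
          * ((starRingEnd ℂ) (φ y) * ψ (f y))) ∂μ := by
    rw [← h.symm.withDensity_phi]
    have hcong : μ.withDensity (UGPhi μ g Rs)
        = μ.withDensity (fun y => ((UGPhi μ g Rs y).toNNReal : ℝ≥0∞)) :=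
      withDensity_congr_ae (h.symm.phi_lt_top.mono fun y hy =>
        (ENNReal.coe_toNNReal hy.ne).symm)
    rw [hcong, integral_withDensity_eq_integral_smul
      (measurable_UGPhi.ennreal_toNNReal) _]
    rfl
  have step4 : ∫ y, (UGPhi μ g Rs y).toReal • ((Real.sqrt ((UGPhi μ f Ds (f y)).toReal) : ℂ)
          * ((starRingEnd ℂ) (φ y) * ψ (f y))) ∂μ
      = ∫ y, (starRingEnd ℂ) (φ y) * UGop μ g f Ds Rs ψ y ∂μ := by
    refine integral_congr_ae ?_
    filter_upwards [h.weight_chain, h.symm.phi_zero_off] with y hw h0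
    by_cases hy : y ∈ Ds
    · rw [UGop, Set.indicator_of_mem hy, Complex.real_smul, ← mul_assoc,
        ← Complex.ofReal_mul, hw hy]
      ring
    · rw [UGop, Set.indicator_of_notMem hy, mul_zero, h0 hy]
      simp
  rw [step1, step2, step3, step4]

lemma UGmem [SigmaFinite μ] (h : UGHyp μ f g Rs Ds) (φ : Lp ℂ 2 μ) :
    MemLp (UGop μ f g Rs Ds ⇑φ) 2 μ :=
  h.memℒp_op (Lp.stronglyMeasurable φ).measurable (Lp.memLp φ)

variable (μ) in
noncomputable def UGclm [SigmaFinite μ] (h : UGHyp μ f g Rs Ds) :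
    Lp ℂ 2 μ →L[ℂ] Lp ℂ 2 μ :=
  LinearMap.mkContinuous
    { toFun := fun φ => (UGmem h φ).toLp _
      map_add' := by
        intro φ ψ
        show (UGmem h (φ + ψ)).toLp _ = (UGmem h φ).toLp _ + (UGmem h ψ).toLp _
        rw [← MemLp.toLp_add (UGmem h φ) (UGmem h ψ)]
        refine MemLp.toLp_congr (UGmem h (φ + ψ)) ((UGmem h φ).add (UGmem h ψ)) ?_
        refine (h.op_congr (Lp.coeFn_add φ ψ)).trans (Filter.EventuallyEq.of_eq ?_)
        funext x
        unfold UGop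
        by_cases hx : x ∈ Rs
        · simp only [Set.indicator_of_mem hx, Pi.add_apply]
          ring
        · simp [Set.indicator_of_notMem hx]
      map_smul' := by
        intro c φ
        rw [RingHom.id_apply]
        show (UGmem h (c • φ)).toLp _ = c • (UGmem h φ).toLp _
        rw [← MemLp.toLp_const_smul c (UGmem h φ)]
        refine MemLp.toLp_congr (UGmem h (c • φ)) ((UGmem h φ).const_smul c) ?_
        refine (h.op_congr (Lp.coeFn_smul c φ)).trans (Filter.EventuallyEq.of_eq ?_)
        funext x
        unfold UGop
        by_cases hx : x ∈ Rs
        · simp only [Set.indicator_of_mem hx, Pi.smul_apply, smul_eq_mul]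
          ring
        · simp [Set.indicator_of_notMem hx] }
    1
    (fun φ => by
      rw [one_mul]
      show ‖(UGmem h φ).toLp _‖ ≤ ‖φ‖
      rw [Lp.norm_toLp, Lp.norm_def]
      exact ENNReal.toReal_mono (Lp.eLpNorm_ne_top φ)
        (h.eLpNorm_op_le (Lp.stronglyMeasurable φ).measurable))

lemma UGclm_coe [SigmaFinite μ] (h : UGHyp μ f g Rs Ds) (φ : Lp ℂ 2 μ) :
    ⇑(UGclm μ h φ) =ᵐ[μ] UGop μ f g Rs Ds ⇑φ :=
  MemLp.coeFn_toLp (UGmem h φ)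

lemma UGcomp [SigmaFinite μ] (h : UGHyp μ f g Rs Ds) (φ : Lp ℂ 2 μ) :
    ⇑(UGclm μ h.symm (UGclm μ h φ)) =ᵐ[μ] Ds.indicator ⇑φ := by
  have e1 := UGclm_coe h.symm (UGclm μ h φ)
  have e2 : UGop μ g f Ds Rs ⇑(UGclm μ h φ) =ᵐ[μ] UGop μ g f Ds Rs (UGop μ f g Rs Ds ⇑φ) :=
    h.symm.op_congr (UGclm_coe h φ)
  exact e1.trans (e2.trans (h.op_op ⇑φ))

lemma UGinner [SigmaFinite μ] (h : UGHyp μ f g Rs Ds) (φ ψ : Lp ℂ 2 μ) :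
    (inner ℂ (UGclm μ h φ) ψ : ℂ) = inner ℂ φ (UGclm μ h.symm ψ) := by
  rw [MeasureTheory.L2.inner_def, MeasureTheory.L2.inner_def]
  have e1 : (fun a => (inner ℂ ((UGclm μ h φ) a) (ψ a) : ℂ))
      =ᵐ[μ] fun a => (starRingEnd ℂ) (UGop μ f g Rs Ds (⇑φ) a) * ψ a := by
    filter_upwards [UGclm_coe h φ] with a ha
    rw [ha]
    exact RCLike.inner_apply' _ _
  have e2 : (fun a => (inner ℂ (φ a) ((UGclm μ h.symm ψ) a) : ℂ))
      =ᵐ[μ] fun a => (starRingEnd ℂ) (φ a) * UGop μ g f Ds Rs (⇑ψ) a := by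
    filter_upwards [UGclm_coe h.symm ψ] with a ha
    rw [ha]
    exact RCLike.inner_apply' _ _
  rw [integral_congr_ae e1, integral_congr_ae e2]
  exact h.integral_op (Lp.stronglyMeasurable φ).measurable (Lp.stronglyMeasurable ψ).measurable

lemma UGadjoint [SigmaFinite μ] (h : UGHyp μ f g Rs Ds) :
    ContinuousLinearMap.adjoint (UGclm μ h) = UGclm μ h.symm := by
  symm
  rw [ContinuousLinearMap.eq_adjoint_iff]
  intro x y
  exact UGinner h.symm x y

end UGAux


namespace Ultragraph

/-- The operator `S_e φ = Φ_{f_e⁻¹}^{1/2}·(φ∘f_e⁻¹)` is a bounded partial isometry on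
`L²(X,μ)`, with adjoint `φ ↦ Φ_{f_e}^{1/2}·(φ∘f_e)`; `S_e S_e^*` is multiplication by
`χ_{R_e}` and `S_e^* S_e` is multiplication by `χ_{D_{r(e)}}`. -/
theorem exists_partial_isometry_of_branchingSystem
    {V E : Type*} {G : Ultragraph V E} {X : Type*} [MeasurableSpace X]
    {μ : Measure X} [SigmaFinite μ] (B : BranchingSystem G X μ) (e : E) :
    ∃ S : Lp ℂ 2 μ →L[ℂ] Lp ℂ 2 μ,
      (∀ φ : Lp ℂ 2 μ, ⇑(S φ) =ᵐ[μ] B.SFun e ⇑φ) ∧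
      (∀ φ : Lp ℂ 2 μ, ⇑((ContinuousLinearMap.adjoint S) φ) =ᵐ[μ] B.SStarFun e ⇑φ) ∧
      S * ContinuousLinearMap.adjoint S * S = S ∧
      (∀ φ : Lp ℂ 2 μ, ⇑((S * ContinuousLinearMap.adjoint S) φ) =ᵐ[μ]
        (B.R e).indicator ⇑φ) ∧
      (∀ φ : Lp ℂ 2 μ, ⇑((ContinuousLinearMap.adjoint S * S) φ) =ᵐ[μ]
        (B.D (G.r e)).indicator ⇑φ) := by
  classical
  have hyp : UGAux.UGHyp μ (B.f e) (B.finv e) (B.R e) (B.D (G.r e)) :=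
    ⟨B.measurable_f e, B.measurable_finv e, B.measurableSet_R e,
      B.measurableSet_D _ (InG0.range e), B.mapsTo_f e, B.mapsTo_finv e,
      B.f_finv e, B.finv_f e, B.pushforward_finv_ac e, B.pushforward_f_ac e⟩
  refine ⟨UGAux.UGclm μ hyp, ?_, ?_, ?_, ?_, ?_⟩
  · intro φ
    exact UGAux.UGclm_coe hyp φ
  · intro φ
    rw [UGAux.UGadjoint hyp]
    exact UGAux.UGclm_coe hyp.symm φ
  · rw [UGAux.UGadjoint hyp]
    ext φ
    have e1 : ⇑(UGAux.UGclm μ hyp (UGAux.UGclm μ hyp.symm (UGAux.UGclm μ hyp φ))) =ᵐ[μ]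
        (B.R e).indicator ⇑(UGAux.UGclm μ hyp φ) :=
      UGAux.UGcomp hyp.symm (UGAux.UGclm μ hyp φ)
    show ⇑(UGAux.UGclm μ hyp (UGAux.UGclm μ hyp.symm (UGAux.UGclm μ hyp φ))) =ᵐ[μ]
      ⇑(UGAux.UGclm μ hyp φ)
    refine e1.trans ?_
    have e2 := UGAux.UGclm_coe hyp φ
    filter_upwards [e2] with x hx
    by_cases hxR : x ∈ B.R e
    · rw [Set.indicator_of_mem hxR]
    · rw [Set.indicator_of_notMem hxR, hx]
      simp [UGAux.UGop, Set.indicator_of_notMem hxR]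
  · intro φ
    rw [UGAux.UGadjoint hyp]
    exact UGAux.UGcomp hyp.symm φ
  · intro φ
    rw [UGAux.UGadjoint hyp]
    exact UGAux.UGcomp hyp φ


end Ultragraph
end

section
/- Let {R_e, D_A, f_e} be a G-branching system on a σ-finite measure space (X, μ). Then the family of operators on L²(X, μ) given by P_A(φ) = χ_{D_A}·φ for A ∈ 𝒢⁰ and S_e(φ) = Φ_{f_e⁻¹}^{1/2}·(φ∘f_e⁻¹) for e ∈ 𝒢¹ forms a Cuntz–Krieger G-family: each P_A is a projection with P_∅ = 0, P_A P_B = P_{A∩B}, P_{A∪B} = P_A + P_B − P_{A∩B}; the S_e are partial isometries with mutually orthogonal ranges; S_e* S_e = P_{r(e)}; S_e S_e* ≤ P_{s(e)}; and P_v = Σ_{e∈s⁻¹(v)} S_e S_e* whenever 0 < |s⁻¹(v)| < ∞. -/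
open MeasureTheory Filter Set
open scoped ENNReal

universe u v w

namespace Ultragraph

set_option linter.unusedSectionVars false

section Aux

variable {X : Type w} [MeasurableSpace X] {μ : Measure X}

private lemma clm_ext_ae {T T' : Lp ℂ 2 μ →L[ℂ] Lp ℂ 2 μ}
    (h : ∀ φ : Lp ℂ 2 μ, ⇑(T φ) =ᵐ[μ] ⇑(T' φ)) : T = T' :=
  ContinuousLinearMap.ext fun φ => Lp.ext (h φ)

private lemma indicator_congr_ae {s : Set X} {f g : X → ℂ} (h : f =ᵐ[μ] g) :
    s.indicator f =ᵐ[μ] s.indicator g := by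
  filter_upwards [h] with x hx
  by_cases hxs : x ∈ s
  · rw [Set.indicator_of_mem hxs, Set.indicator_of_mem hxs, hx]
  · rw [Set.indicator_of_notMem hxs, Set.indicator_of_notMem hxs]

/-- Multiplication by the indicator of a measurable set, as an operator on `L²`. -/
noncomputable def mulInd (s : Set X) (hs : MeasurableSet s) :
    Lp ℂ 2 μ →L[ℂ] Lp ℂ 2 μ :=
  LinearMap.mkContinuous
    { toFun := fun φ => ((Lp.memLp φ).indicator hs).toLp (s.indicator ⇑φ)
      map_add' := fun φ ψ => by
        rw [← MemLp.toLp_add]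
        apply MemLp.toLp_congr
        filter_upwards [Lp.coeFn_add φ ψ] with x hx
        rw [Pi.add_apply]
        by_cases hxs : x ∈ s
        · rw [Set.indicator_of_mem hxs, Set.indicator_of_mem hxs,
            Set.indicator_of_mem hxs, hx, Pi.add_apply]
        · rw [Set.indicator_of_notMem hxs, Set.indicator_of_notMem hxs,
            Set.indicator_of_notMem hxs, add_zero]
      map_smul' := fun c φ => by
        simp only [RingHom.id_apply]
        rw [← MemLp.toLp_const_smul (f := s.indicator ⇑φ) (p := 2) (μ := μ) c ((Lp.memLp φ).indicator hs)]
        apply MemLp.toLp_congr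
        filter_upwards [Lp.coeFn_smul c φ] with x hx
        rw [Pi.smul_apply]
        by_cases hxs : x ∈ s
        · rw [Set.indicator_of_mem hxs, Set.indicator_of_mem hxs, hx, Pi.smul_apply]
        · rw [Set.indicator_of_notMem hxs, Set.indicator_of_notMem hxs, smul_zero] }
    1
    (fun φ => by
      simp only [LinearMap.coe_mk, AddHom.coe_mk, one_mul]
      calc ‖((Lp.memLp φ).indicator hs).toLp (s.indicator ⇑φ)‖
          = (eLpNorm (s.indicator ⇑φ) 2 μ).toReal := Lp.norm_toLp _ _
        _ ≤ (eLpNorm ⇑φ 2 μ).toReal :=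
            ENNReal.toReal_mono (Lp.eLpNorm_ne_top φ)
              (eLpNorm_mono_ae (ae_of_all _ fun x => norm_indicator_le_norm_self _ _))
        _ = ‖φ‖ := (Lp.norm_def φ).symm)

lemma mulInd_apply (s : Set X) (hs : MeasurableSet s) (φ : Lp ℂ 2 μ) :
    ⇑(mulInd s hs φ) =ᵐ[μ] s.indicator ⇑φ :=
  MemLp.coeFn_toLp (f := s.indicator ⇑φ) (p := 2) (μ := μ) ((Lp.memLp φ).indicator hs)

private lemma mulInd_congr_set {s t : Set X} (hs : MeasurableSet s) (ht : MeasurableSet t)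
    (h : s = t) : (mulInd s hs : Lp ℂ 2 μ →L[ℂ] Lp ℂ 2 μ) = mulInd t ht := by
  subst h; rfl

private lemma mulInd_congr {s t : Set X} (hs : MeasurableSet s) (ht : MeasurableSet t)
    (h : (s : Set X) =ᵐ[μ] (t : Set X)) :
    (mulInd s hs : Lp ℂ 2 μ →L[ℂ] Lp ℂ 2 μ) = mulInd t ht := by
  apply clm_ext_ae; intro φ
  refine (mulInd_apply s hs φ).trans (.trans ?_ (mulInd_apply t ht φ).symm)
  filter_upwards [eventuallyEq_set.mp h] with x hx
  by_cases hxs : x ∈ s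
  · rw [Set.indicator_of_mem hxs, Set.indicator_of_mem (hx.mp hxs)]
  · rw [Set.indicator_of_notMem hxs, Set.indicator_of_notMem (fun ht' => hxs (hx.mpr ht'))]

private lemma mulInd_comp (s t : Set X) (hs : MeasurableSet s) (ht : MeasurableSet t) :
    (mulInd s hs : Lp ℂ 2 μ →L[ℂ] Lp ℂ 2 μ) * mulInd t ht = mulInd (s ∩ t) (hs.inter ht) := by
  apply clm_ext_ae; intro φ
  have h1 := mulInd_apply s hs (mulInd t ht φ)
  have h2 := indicator_congr_ae (s := s) (mulInd_apply t ht φ)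
  refine ((h1.trans h2).trans ?_).trans (mulInd_apply _ _ φ).symm
  rw [Set.indicator_indicator]

private lemma mulInd_idem (s : Set X) (hs : MeasurableSet s) :
    (mulInd s hs : Lp ℂ 2 μ →L[ℂ] Lp ℂ 2 μ) * mulInd s hs = mulInd s hs := by
  rw [mulInd_comp]; exact mulInd_congr_set _ _ (Set.inter_self s)

private lemma mulInd_star (s : Set X) (hs : MeasurableSet s) :
    star (mulInd s hs : Lp ℂ 2 μ →L[ℂ] Lp ℂ 2 μ) = mulInd s hs := by
  rw [ContinuousLinearMap.star_eq_adjoint]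
  symm
  rw [ContinuousLinearMap.eq_adjoint_iff]
  intro φ ψ
  rw [L2.inner_def, L2.inner_def]
  apply integral_congr_ae
  filter_upwards [mulInd_apply s hs φ, mulInd_apply s hs ψ] with x h1 h2
  rw [h1, h2]
  simp only [RCLike.inner_apply]
  by_cases hxs : x ∈ s <;>
    simp [Set.indicator_of_mem, Set.indicator_of_notMem, hxs]

private lemma inner_mulInd_self (s : Set X) (hs : MeasurableSet s) (φ : Lp ℂ 2 μ) :
    (inner ℂ (mulInd s hs φ) φ : ℂ) = inner ℂ (mulInd s hs φ) (mulInd s hs φ) := by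
  rw [L2.inner_def, L2.inner_def]
  apply integral_congr_ae
  filter_upwards [mulInd_apply s hs φ] with x hx
  rw [hx]
  simp only [RCLike.inner_apply]
  by_cases hxs : x ∈ s <;>
    simp [Set.indicator_of_mem, Set.indicator_of_notMem, hxs]

private lemma mulInd_union {s t : Set X} (hs : MeasurableSet s) (ht : MeasurableSet t) :
    (mulInd (s ∪ t) (hs.union ht) : Lp ℂ 2 μ →L[ℂ] Lp ℂ 2 μ)
      = mulInd s hs + mulInd t ht - mulInd (s ∩ t) (hs.inter ht) := by
  apply clm_ext_ae; intro φ
  have key : ⇑((mulInd s hs + mulInd t ht - mulInd (s ∩ t) (hs.inter ht)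
      : Lp ℂ 2 μ →L[ℂ] Lp ℂ 2 μ) φ)
      =ᵐ[μ] fun x => s.indicator ⇑φ x + t.indicator ⇑φ x - (s ∩ t).indicator ⇑φ x := by
    simp only [ContinuousLinearMap.sub_apply, ContinuousLinearMap.add_apply]
    filter_upwards [Lp.coeFn_sub (mulInd s hs φ + mulInd t ht φ)
        (mulInd (s ∩ t) (hs.inter ht) φ),
      Lp.coeFn_add (mulInd s hs φ) (mulInd t ht φ),
      mulInd_apply s hs φ, mulInd_apply t ht φ, mulInd_apply (s ∩ t) (hs.inter ht) φ]
      with x k1 k2 k3 k4 k5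
    rw [k1, Pi.sub_apply, k2, Pi.add_apply, k3, k4, k5]
  refine ((mulInd_apply _ _ φ).trans (ae_of_all _ fun x => ?_)).trans key.symm
  by_cases hxs : x ∈ s <;> by_cases hxt : x ∈ t
  · have h1 : x ∈ s ∪ t := Or.inl hxs
    have h2 : x ∈ s ∩ t := ⟨hxs, hxt⟩
    rw [Set.indicator_of_mem h1, Set.indicator_of_mem hxs, Set.indicator_of_mem hxt,
      Set.indicator_of_mem h2]
    ring
  · have h1 : x ∈ s ∪ t := Or.inl hxs
    have h2 : x ∉ s ∩ t := fun hc => hxt hc.2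
    rw [Set.indicator_of_mem h1, Set.indicator_of_mem hxs, Set.indicator_of_notMem hxt,
      Set.indicator_of_notMem h2]
    ring
  · have h1 : x ∈ s ∪ t := Or.inr hxt
    have h2 : x ∉ s ∩ t := fun hc => hxs hc.1
    rw [Set.indicator_of_mem h1, Set.indicator_of_notMem hxs, Set.indicator_of_mem hxt,
      Set.indicator_of_notMem h2]
    ring
  · have h1 : x ∉ s ∪ t := fun hc => hc.elim hxs hxt
    have h2 : x ∉ s ∩ t := fun hc => hxs hc.1
    rw [Set.indicator_of_notMem h1, Set.indicator_of_notMem hxs,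
      Set.indicator_of_notMem hxt, Set.indicator_of_notMem h2]
    ring

private lemma Lp_coeFn_sum {ι : Type*} (F : Finset ι) (f : ι → Lp ℂ 2 μ) :
    ⇑(∑ i ∈ F, f i) =ᵐ[μ] fun x => ∑ i ∈ F, f i x := by
  classical
  induction F using Finset.cons_induction with
  | empty => simp only [Finset.sum_empty]; exact Lp.coeFn_zero ℂ 2 μ
  | cons a F' ha ih =>
      rw [Finset.sum_cons]
      refine (Lp.coeFn_add _ _).trans ?_
      filter_upwards [ih] with x hx
      rw [Pi.add_apply, hx, Finset.sum_cons]

end Aux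

section BS

variable {V : Type u} {E : Type v} {G : Ultragraph V E} {X : Type w} [MeasurableSpace X]
  {μ : Measure X} [SigmaFinite μ] (B : BranchingSystem G X μ)

namespace BranchingSystem

lemma measD (e : E) : MeasurableSet (B.D (G.r e)) := B.measurableSet_D _ (InG0.range e)

/-- The pushforward measure `μ ∘ f_e⁻¹`. -/
noncomputable def nu (e : E) : Measure X := (μ.restrict (B.D (G.r e))).map (B.f e)

/-- The pushforward measure `μ ∘ f_e`. -/
noncomputable def lam (e : E) : Measure X := (μ.restrict (B.R e)).map (B.finv e)

lemma phi_def (e : E) : B.PhiFinv e = (B.nu e).rnDeriv μ := rfl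

lemma map_finv_nu (e : E) : (B.nu e).map (B.finv e) = μ.restrict (B.D (G.r e)) := by
  rw [nu, Measure.map_map (B.measurable_finv e) (B.measurable_f e)]
  have h : Measure.map (B.finv e ∘ B.f e) (μ.restrict (B.D (G.r e)))
      = Measure.map id (μ.restrict (B.D (G.r e))) := Measure.map_congr (B.finv_f e)
  rw [h, Measure.map_id]

lemma map_f_lam (e : E) : (B.lam e).map (B.f e) = μ.restrict (B.R e) := by
  rw [lam, Measure.map_map (B.measurable_f e) (B.measurable_finv e)]
  have h : Measure.map (B.f e ∘ B.finv e) (μ.restrict (B.R e))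
      = Measure.map id (μ.restrict (B.R e)) := Measure.map_congr (B.f_finv e)
  rw [h, Measure.map_id]

lemma sigmaFinite_nu (e : E) : SigmaFinite (B.nu e) := by
  apply Measure.FiniteSpanningSetsIn.sigmaFinite (C := Set.univ)
  refine ⟨fun n => B.finv e ⁻¹' (spanningSets (μ.restrict (B.D (G.r e))) n),
    fun n => trivial, fun n => ?_, ?_⟩
  · rw [← Measure.map_apply (B.measurable_finv e) (measurableSet_spanningSets _ n),
      B.map_finv_nu e]
    exact measure_spanningSets_lt_top _ n
  · rw [← Set.preimage_iUnion, iUnion_spanningSets, Set.preimage_univ]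

lemma nu_ac (e : E) : B.nu e ≪ μ :=
  (B.pushforward_finv_ac e).trans (Measure.absolutelyContinuous_of_le Measure.restrict_le_self)

lemma withDensity_phi (e : E) : μ.withDensity (B.PhiFinv e) = B.nu e := by
  haveI := B.sigmaFinite_nu e
  rw [B.phi_def e]
  exact Measure.withDensity_rnDeriv_eq _ _ (B.nu_ac e)

lemma phi_lt_top (e : E) : ∀ᵐ x ∂μ, B.PhiFinv e x < ⊤ := by
  haveI := B.sigmaFinite_nu e
  rw [B.phi_def e]
  exact Measure.rnDeriv_lt_top _ _

lemma nu_compl_R (e : E) : B.nu e (B.R e)ᶜ = 0 := by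
  refine B.pushforward_finv_ac e ?_
  rw [Measure.restrict_apply (B.measurableSet_R e).compl, Set.compl_inter_self]
  exact measure_empty

lemma phi_zero_off (e : E) : ∀ᵐ x ∂μ, x ∉ B.R e → B.PhiFinv e x = 0 := by
  have h0 : ∫⁻ x in (B.R e)ᶜ, B.PhiFinv e x ∂μ = 0 := by
    rw [← withDensity_apply _ (B.measurableSet_R e).compl, B.withDensity_phi e]
    exact B.nu_compl_R e
  have := (setLIntegral_eq_zero_iff (B.measurableSet_R e).compl
    (Measure.measurable_rnDeriv _ _)).mp h0
  filter_upwards [this] with x hx hxR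
  exact hx hxR

lemma restrictR_ac (e : E) : μ.restrict (B.R e) ≪ B.nu e := by
  refine Measure.AbsolutelyContinuous.mk fun N hN h0 => ?_
  have hD : μ.restrict (B.D (G.r e)) (B.f e ⁻¹' N) = 0 := by
    rw [← Measure.map_apply (B.measurable_f e) hN]; exact h0
  have hlam : B.lam e (B.f e ⁻¹' N) = 0 := B.pushforward_f_ac e hD
  calc μ.restrict (B.R e) N = (B.lam e).map (B.f e) N := by rw [B.map_f_lam e]
    _ = B.lam e (B.f e ⁻¹' N) := Measure.map_apply (B.measurable_f e) hN
    _ = 0 := hlam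

lemma phi_pos_on_R (e : E) : ∀ᵐ x ∂μ, x ∈ B.R e → B.PhiFinv e x ≠ 0 := by
  set Z := {x | B.PhiFinv e x = 0} with hZdef
  have hZ : MeasurableSet Z := Measure.measurable_rnDeriv _ _ (measurableSet_singleton 0)
  have hnuZ : B.nu e Z = 0 := by
    rw [← B.withDensity_phi e, withDensity_apply _ hZ]
    rw [setLIntegral_congr_fun hZ (fun x hx => hx)]
    simp
  have h1 : μ (Z ∩ B.R e) = 0 := by
    have := B.restrictR_ac e hnuZ
    rwa [Measure.restrict_apply hZ] at this
  have := measure_eq_zero_iff_ae_notMem.mp h1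
  filter_upwards [this] with x hx hxR
  intro h0
  exact hx ⟨h0, hxR⟩

lemma measurable_phi (e : E) : Measurable (B.PhiFinv e) := Measure.measurable_rnDeriv _ _

lemma measurable_sFun (e : E) {g : X → ℂ} (hg : Measurable g) :
    Measurable (B.SFun e g) := by
  apply Measurable.indicator _ (B.measurableSet_R e)
  exact (Complex.measurable_ofReal.comp
    ((B.measurable_phi e).ennreal_toReal.sqrt)).mul (hg.comp (B.measurable_finv e))

lemma sFun_congr (e : E) {g h : X → ℂ} (hgh : g =ᵐ[μ] h) :
    B.SFun e g =ᵐ[μ] B.SFun e h := by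
  set N := toMeasurable μ {x | g x ≠ h x} with hNdef
  have hNmeas : MeasurableSet N := measurableSet_toMeasurable μ _
  have hN : μ N = 0 := by rw [hNdef, measure_toMeasurable]; exact hgh
  have key : μ (B.R e ∩ B.finv e ⁻¹' N) = 0 := by
    have h1 : μ.restrict (B.D (G.r e)) N = 0 :=
      le_antisymm (le_trans (Measure.le_iff'.1 Measure.restrict_le_self N) hN.le) zero_le
    have h2 : B.lam e N = 0 := B.pushforward_f_ac e h1
    rw [lam, Measure.map_apply (B.measurable_finv e) hNmeas,
      Measure.restrict_apply (B.measurable_finv e hNmeas)] at h2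
    rwa [Set.inter_comm] at h2
  filter_upwards [measure_eq_zero_iff_ae_notMem.mp key] with x hx
  by_cases hxR : x ∈ B.R e
  · have hnN : B.finv e x ∉ N := fun hc => hx ⟨hxR, hc⟩
    have hgh' : g (B.finv e x) = h (B.finv e x) := by
      by_contra hne
      exact hnN (subset_toMeasurable _ _ hne)
    simp only [SFun, Set.indicator_of_mem hxR, hgh']
  · simp only [SFun, Set.indicator_of_notMem hxR]

lemma sFun_sq (e : E) {g : X → ℂ} :
    (fun x => (‖B.SFun e g x‖₊ : ℝ≥0∞) ^ 2) =ᵐ[μ]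
      fun x => B.PhiFinv e x * (‖g (B.finv e x)‖₊ : ℝ≥0∞) ^ 2 := by
  filter_upwards [B.phi_lt_top e, B.phi_zero_off e] with x hfin hzero
  by_cases hx : x ∈ B.R e
  · simp only [SFun, Set.indicator_of_mem hx]
    rw [nnnorm_mul, ENNReal.coe_mul, mul_pow]
    congr 1
    rw [← enorm_eq_nnnorm, ← ofReal_norm, Complex.norm_real,
      Real.norm_of_nonneg (Real.sqrt_nonneg _), ← ENNReal.ofReal_pow (Real.sqrt_nonneg _),
      Real.sq_sqrt ENNReal.toReal_nonneg, ENNReal.ofReal_toReal hfin.ne]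
  · simp only [SFun, Set.indicator_of_notMem hx, hzero hx, nnnorm_zero, ENNReal.coe_zero,
      zero_mul]
    rw [zero_pow two_ne_zero]

lemma lintegral_sFun_sq (e : E) {g : X → ℂ} (hg : Measurable g) :
    ∫⁻ x, (‖B.SFun e g x‖₊ : ℝ≥0∞) ^ 2 ∂μ
      = ∫⁻ x in B.D (G.r e), (‖g x‖₊ : ℝ≥0∞) ^ 2 ∂μ := by
  haveI := B.sigmaFinite_nu e
  rw [lintegral_congr_ae (B.sFun_sq e)]
  have hm : AEMeasurable (fun x => (‖g (B.finv e x)‖₊ : ℝ≥0∞) ^ 2) μ :=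
    (((hg.comp (B.measurable_finv e)).nnnorm.coe_nnreal_ennreal).pow_const 2).aemeasurable
  rw [B.phi_def e, MeasureTheory.lintegral_rnDeriv_mul (B.nu_ac e) hm]
  rw [nu, lintegral_map (f := fun x => (‖g (B.finv e x)‖₊ : ℝ≥0∞) ^ 2)
    (((hg.comp (B.measurable_finv e)).nnnorm.coe_nnreal_ennreal).pow_const 2)
    (B.measurable_f e)]
  apply lintegral_congr_ae
  filter_upwards [B.finv_f e] with y hy
  rw [hy]

end BranchingSystem

private lemma eLpNorm_two_eq (f : X → ℂ) :
    eLpNorm f 2 μ = (∫⁻ x, (‖f x‖₊ : ℝ≥0∞) ^ 2 ∂μ) ^ (1/2 : ℝ) := by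
  rw [eLpNorm_eq_lintegral_rpow_enorm_toReal two_ne_zero ENNReal.ofNat_ne_top]
  have h2 : ∀ x : ℝ≥0∞, x ^ ((2 : ℝ≥0∞).toReal) = x ^ (2 : ℕ) := fun x => by
    rw [ENNReal.toReal_ofNat, ← ENNReal.rpow_natCast]
    norm_num
  simp only [h2, ENNReal.toReal_ofNat]
  norm_num
  rfl

namespace BranchingSystem

lemma eLpNorm_sFun_eq (e : E) {g : X → ℂ} (hg : Measurable g) :
    eLpNorm (B.SFun e g) 2 μ = eLpNorm ((B.D (G.r e)).indicator g) 2 μ := by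
  rw [eLpNorm_two_eq, eLpNorm_two_eq, B.lintegral_sFun_sq e hg]
  congr 1
  rw [← lintegral_indicator (B.measD e)]
  apply lintegral_congr; intro x
  by_cases hx : x ∈ B.D (G.r e) <;>
    simp [Set.indicator_of_mem, Set.indicator_of_notMem, hx]

lemma memℒp_sFun (e : E) {g : X → ℂ} (hg : Measurable g) (h2 : MemLp g 2 μ) :
    MemLp (B.SFun e g) 2 μ := by
  refine ⟨(B.measurable_sFun e hg).aestronglyMeasurable, ?_⟩
  rw [B.eLpNorm_sFun_eq e hg]
  exact lt_of_le_of_lt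
    (eLpNorm_mono_ae (ae_of_all _ fun x => norm_indicator_le_norm_self _ _)) h2.2

end BranchingSystem

/-- A measurable representative of an `L²` element. -/
noncomputable def mkFun (φ : Lp ℂ 2 μ) : X → ℂ :=
  (Lp.memLp φ).aestronglyMeasurable.mk ⇑φ

lemma mkFun_measurable (φ : Lp ℂ 2 μ) : Measurable (mkFun φ) :=
  (Lp.memLp φ).aestronglyMeasurable.stronglyMeasurable_mk.measurable

lemma mkFun_ae (φ : Lp ℂ 2 μ) : ⇑φ =ᵐ[μ] mkFun φ :=
  (Lp.memLp φ).aestronglyMeasurable.ae_eq_mk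

lemma mkFun_mem (φ : Lp ℂ 2 μ) : MemLp (mkFun φ) 2 μ :=
  (Lp.memLp φ).ae_eq (mkFun_ae φ)

namespace BranchingSystem

/-- The operator `S_e` on `L²`. -/
noncomputable def SOp (e : E) : Lp ℂ 2 μ →L[ℂ] Lp ℂ 2 μ :=
  LinearMap.mkContinuous
    { toFun := fun φ =>
        (B.memℒp_sFun e (mkFun_measurable φ) (mkFun_mem φ)).toLp (B.SFun e (mkFun φ))
      map_add' := fun φ ψ => by
        rw [← MemLp.toLp_add]
        apply MemLp.toLp_congr
        have h1 : mkFun (φ + ψ) =ᵐ[μ] fun x => mkFun φ x + mkFun ψ x := by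
          filter_upwards [mkFun_ae (φ + ψ), mkFun_ae φ, mkFun_ae ψ, Lp.coeFn_add φ ψ]
            with x h1 h2 h3 h4
          rw [← h1, h4, Pi.add_apply, h2, h3]
        refine (B.sFun_congr e h1).trans (ae_of_all _ fun x => ?_)
        simp only [SFun, Pi.add_apply]
        by_cases hx : x ∈ B.R e
        · rw [Set.indicator_of_mem hx, Set.indicator_of_mem hx, Set.indicator_of_mem hx,
            mul_add]
        · rw [Set.indicator_of_notMem hx, Set.indicator_of_notMem hx,
            Set.indicator_of_notMem hx, add_zero]
      map_smul' := fun c φ => by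
        simp only [RingHom.id_apply]
        rw [← MemLp.toLp_const_smul c (B.memℒp_sFun e (mkFun_measurable φ) (mkFun_mem φ))]
        apply MemLp.toLp_congr
        have h1 : mkFun (c • φ) =ᵐ[μ] fun x => c * mkFun φ x := by
          filter_upwards [mkFun_ae (c • φ), mkFun_ae φ, Lp.coeFn_smul c φ]
            with x h1 h2 h3
          rw [← h1, h3, Pi.smul_apply, smul_eq_mul, h2]
        refine (B.sFun_congr e h1).trans (ae_of_all _ fun x => ?_)
        simp only [SFun, Pi.smul_apply, smul_eq_mul]
        by_cases hx : x ∈ B.R e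
        · rw [Set.indicator_of_mem hx, Set.indicator_of_mem hx]
          ring
        · rw [Set.indicator_of_notMem hx, Set.indicator_of_notMem hx, mul_zero] }
    1
    (fun φ => by
      simp only [LinearMap.coe_mk, AddHom.coe_mk, one_mul]
      refine le_trans (le_of_eq (Lp.norm_toLp _ _)) ?_
      rw [B.eLpNorm_sFun_eq e (mkFun_measurable φ), Lp.norm_def,
        eLpNorm_congr_ae (mkFun_ae φ)]
      exact ENNReal.toReal_mono (mkFun_mem φ).2.ne
        (eLpNorm_mono_ae (ae_of_all _ fun x => norm_indicator_le_norm_self _ _)))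

lemma sOp_apply (e : E) (φ : Lp ℂ 2 μ) : ⇑(B.SOp e φ) =ᵐ[μ] B.SFun e ⇑φ :=
  (MemLp.coeFn_toLp (B.memℒp_sFun e (mkFun_measurable φ) (mkFun_mem φ))).trans
    (B.sFun_congr e (mkFun_ae φ).symm)

lemma norm_sOp_apply (e : E) (φ : Lp ℂ 2 μ) :
    ‖B.SOp e φ‖ = ‖mulInd (B.D (G.r e)) (B.measD e) φ‖ := by
  rw [Lp.norm_def, Lp.norm_def, eLpNorm_congr_ae (B.sOp_apply e φ),
    eLpNorm_congr_ae (mulInd_apply _ _ φ),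
    eLpNorm_congr_ae (B.sFun_congr e (mkFun_ae φ)),
    B.eLpNorm_sFun_eq e (mkFun_measurable φ),
    eLpNorm_congr_ae (indicator_congr_ae (mkFun_ae φ).symm)]

lemma star_sOp_mul_sOp (e : E) :
    star (B.SOp e) * B.SOp e = mulInd (B.D (G.r e)) (B.measD e) := by
  rw [← sub_eq_zero]
  set T := star (B.SOp e) * B.SOp e - mulInd (B.D (G.r e)) (B.measD e) with hT
  have h : ∀ φ : Lp ℂ 2 μ, (inner ℂ (T φ) φ : ℂ) = 0 := by
    intro φ
    rw [hT]
    simp only [ContinuousLinearMap.sub_apply, ContinuousLinearMap.mul_apply]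
    rw [inner_sub_left, ContinuousLinearMap.star_eq_adjoint,
      ContinuousLinearMap.adjoint_inner_left, inner_mulInd_self,
      inner_self_eq_norm_sq_to_K, inner_self_eq_norm_sq_to_K, B.norm_sOp_apply e φ]
    exact sub_self _
  have h2 := (inner_map_self_eq_zero (T : Lp ℂ 2 μ →ₗ[ℂ] Lp ℂ 2 μ)).mp (fun x => h x)
  exact ContinuousLinearMap.coe_injective
    (h2.trans (ContinuousLinearMap.coe_zero (M₁ := Lp ℂ 2 μ) (M₂ := Lp ℂ 2 μ)).symm)

lemma sOp_mul_mulIndD (e : E) :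
    B.SOp e * mulInd (B.D (G.r e)) (B.measD e) = B.SOp e := by
  apply clm_ext_ae; intro φ
  rw [ContinuousLinearMap.mul_apply]
  refine (B.sOp_apply e _).trans ?_
  refine (B.sFun_congr e (mulInd_apply _ _ φ)).trans ?_
  refine .trans (ae_of_all _ fun x => ?_) (B.sOp_apply e φ).symm
  simp only [SFun]
  by_cases hx : x ∈ B.R e
  · rw [Set.indicator_of_mem hx, Set.indicator_of_mem hx,
      Set.indicator_of_mem (B.mapsTo_finv e hx)]
  · rw [Set.indicator_of_notMem hx, Set.indicator_of_notMem hx]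

lemma mulIndR_mul_sOp (e : E) :
    mulInd (B.R e) (B.measurableSet_R e) * B.SOp e = B.SOp e := by
  apply clm_ext_ae; intro φ
  rw [ContinuousLinearMap.mul_apply]
  refine (mulInd_apply _ _ _).trans ?_
  refine (indicator_congr_ae (B.sOp_apply e φ)).trans ?_
  refine .trans (ae_of_all _ fun x => ?_) (B.sOp_apply e φ).symm
  simp only [SFun]
  rw [Set.indicator_indicator, Set.inter_self]

lemma mulIndS_mul_sOp (e : E) :
    mulInd (B.D {G.s e}) (B.measurableSet_D _ (InG0.singleton _)) * B.SOp e = B.SOp e := by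
  apply clm_ext_ae; intro φ
  rw [ContinuousLinearMap.mul_apply]
  refine (mulInd_apply _ _ _).trans ?_
  refine (indicator_congr_ae (B.sOp_apply e φ)).trans ?_
  refine .trans ?_ (B.sOp_apply e φ).symm
  filter_upwards [measure_eq_zero_iff_ae_notMem.mp (B.R_subset_D e)] with x hx
  by_cases hxD : x ∈ B.D {G.s e}
  · rw [Set.indicator_of_mem hxD]
  · rw [Set.indicator_of_notMem hxD]
    have hxR : x ∉ B.R e := fun hR => hx ⟨hR, hxD⟩
    simp only [SFun, Set.indicator_of_notMem hxR]

lemma star_sOp_mul_sOp_ne (e e' : E) (hne : e ≠ e') :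
    star (B.SOp e) * B.SOp e' = 0 := by
  apply ContinuousLinearMap.ext; intro φ
  rw [ContinuousLinearMap.mul_apply, ContinuousLinearMap.zero_apply]
  apply ext_inner_right ℂ; intro ψ
  rw [ContinuousLinearMap.star_eq_adjoint, ContinuousLinearMap.adjoint_inner_left,
    inner_zero_left, L2.inner_def]
  apply integral_eq_zero_of_ae
  filter_upwards [B.sOp_apply e' φ, B.sOp_apply e ψ,
    measure_eq_zero_iff_ae_notMem.mp (B.ae_disjoint e e' hne)] with x h1 h2 h3
  rw [h1, h2, Pi.zero_apply]
  simp only [RCLike.inner_apply]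
  by_cases hx : x ∈ B.R e
  · have hx' : x ∉ B.R e' := fun hc => h3 ⟨hx, hc⟩
    simp [SFun, Set.indicator_of_notMem hx']
  · simp [SFun, Set.indicator_of_notMem hx]

lemma sOp_dense (e : E) (ψ : Lp ℂ 2 μ)
    (h1 : star (B.SOp e) ψ = 0)
    (h2 : mulInd (B.R e) (B.measurableSet_R e) ψ = ψ) : ψ = 0 := by
  haveI := B.sigmaFinite_nu e
  have hinner : ∀ φ : Lp ℂ 2 μ, (inner ℂ (B.SOp e φ) ψ : ℂ) = 0 := by
    intro φ
    rw [← ContinuousLinearMap.adjoint_inner_right, ← ContinuousLinearMap.star_eq_adjoint,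
      h1, inner_zero_right]
  haveI : SigmaFinite (μ + B.nu e) := inferInstance
  set t := spanningSets (μ + B.nu e) with ht
  have htmeas : ∀ n, MeasurableSet (t n) := fun n => measurableSet_spanningSets _ n
  have htfin : ∀ n, B.nu e (t n) < ⊤ := fun n =>
    lt_of_le_of_lt (by rw [Measure.add_apply]; exact le_add_self)
      (measure_spanningSets_lt_top _ n)
  set gn : ℕ → X → ℂ := fun n =>
    (B.R e ∩ t n).indicator
      (fun x => (Real.sqrt ((B.PhiFinv e x).toReal) : ℂ) * mkFun ψ x) with hgn
  have hB2 : ∫⁻ x, (‖mkFun ψ x‖₊ : ℝ≥0∞) ^ 2 ∂μ < ⊤ := by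
    by_contra htop
    have hmem := (mkFun_mem ψ).2
    rw [eLpNorm_two_eq, top_le_iff.mp (not_lt.mp htop),
      ENNReal.top_rpow_of_pos (by norm_num)] at hmem
    exact lt_irrefl _ hmem
  have hInt : ∀ n, Integrable (gn n) μ := by
    intro n
    constructor
    · exact (Measurable.indicator
        ((Complex.measurable_ofReal.comp ((B.measurable_phi e).ennreal_toReal.sqrt)).mul
          (mkFun_measurable ψ))
        ((B.measurableSet_R e).inter (htmeas n))).aestronglyMeasurable
    · rw [hasFiniteIntegral_def]
      set A : X → ℝ≥0∞ := fun x =>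
        (B.R e ∩ t n).indicator (fun x => ENNReal.ofReal (Real.sqrt ((B.PhiFinv e x).toReal))) x
      set Bf : X → ℝ≥0∞ := fun x => (‖mkFun ψ x‖₊ : ℝ≥0∞)
      have hbound : ∀ x, (‖gn n x‖₊ : ℝ≥0∞) ≤ (A * Bf) x := by
        intro x
        by_cases hx : x ∈ B.R e ∩ t n
        · simp only [hgn, A, Bf, Pi.mul_apply, Set.indicator_of_mem hx]
          rw [nnnorm_mul, ENNReal.coe_mul, ← enorm_eq_nnnorm (_ : ℂ), ← ofReal_norm,
            Complex.norm_real, Real.norm_of_nonneg (Real.sqrt_nonneg _)]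
        · simp only [hgn, A, Bf, Pi.mul_apply, Set.indicator_of_notMem hx]
          simp
      refine lt_of_le_of_lt (lintegral_mono hbound) ?_
      have hmA : AEMeasurable A μ := (Measurable.indicator
        ((B.measurable_phi e).ennreal_toReal.sqrt.ennreal_ofReal)
        ((B.measurableSet_R e).inter (htmeas n))).aemeasurable
      have hmB : AEMeasurable Bf μ := (mkFun_measurable ψ).nnnorm.coe_nnreal_ennreal.aemeasurable
      refine lt_of_le_of_lt (ENNReal.lintegral_mul_le_Lp_mul_Lq μ
        (show Real.HolderConjugate 2 2 from Real.HolderConjugate.two_two) hmA hmB) ?_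
      apply ENNReal.mul_lt_top
      · have hA2 : ∫⁻ x, A x ^ (2:ℝ) ∂μ ≤ B.nu e (t n) := by
          have hle : ∀ x, A x ^ (2:ℝ) ≤ (B.R e ∩ t n).indicator (B.PhiFinv e) x := by
            intro x
            by_cases hx : x ∈ B.R e ∩ t n
            · simp only [A, Set.indicator_of_mem hx]
              have h1 : ENNReal.ofReal (Real.sqrt ((B.PhiFinv e x).toReal)) ^ (2:ℝ)
                  = ENNReal.ofReal ((B.PhiFinv e x).toReal) := by
                rw [ENNReal.ofReal_rpow_of_nonneg (Real.sqrt_nonneg _)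
                  (by norm_num : (0:ℝ) ≤ 2)]
                congr 1
                rw [show (2:ℝ) = ((2:ℕ):ℝ) by norm_num, Real.rpow_natCast,
                  Real.sq_sqrt ENNReal.toReal_nonneg]
              rw [h1]
              exact ENNReal.ofReal_toReal_le
            · simp only [A, Set.indicator_of_notMem hx]
              rw [ENNReal.zero_rpow_of_pos (by norm_num)]
          refine le_trans (lintegral_mono hle) ?_
          rw [lintegral_indicator ((B.measurableSet_R e).inter (htmeas n)),
            ← withDensity_apply _ ((B.measurableSet_R e).inter (htmeas n)),
            B.withDensity_phi e]
          exact measure_mono Set.inter_subset_right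
        refine ENNReal.rpow_lt_top_of_nonneg (by norm_num) ?_
        exact (lt_of_le_of_lt hA2 (htfin n)).ne
      · refine ENNReal.rpow_lt_top_of_nonneg (by norm_num) ?_
        have : ∫⁻ x, Bf x ^ (2:ℝ) ∂μ = ∫⁻ x, (‖mkFun ψ x‖₊ : ℝ≥0∞) ^ 2 ∂μ := by
          apply lintegral_congr; intro x
          rw [← ENNReal.rpow_natCast (Bf x) 2]
          norm_num
        rw [this]
        exact hB2.ne
  have hfi : ∀ᵐ x ∂μ, x ∈ B.R e → B.f e (B.finv e x) = x :=
    ae_imp_of_ae_restrict (B.f_finv e)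
  have hset : ∀ n, ∀ s : Set X, MeasurableSet s → μ s < ⊤ → ∫ x in s, gn n x ∂μ = 0 := by
    intro n s hs hsfin
    have hmeasDf : MeasurableSet (B.D (G.r e) ∩ B.f e ⁻¹' (s ∩ t n)) :=
      (B.measD e).inter (B.measurable_f e (hs.inter (htmeas n)))
    have hfinDf : μ (B.D (G.r e) ∩ B.f e ⁻¹' (s ∩ t n)) ≠ ⊤ := by
      have heq : μ (B.D (G.r e) ∩ B.f e ⁻¹' (s ∩ t n)) = B.nu e (s ∩ t n) := by
        rw [nu, Measure.map_apply (B.measurable_f e) (hs.inter (htmeas n)),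
          Measure.restrict_apply (B.measurable_f e (hs.inter (htmeas n))), Set.inter_comm]
      rw [heq]
      exact (lt_of_le_of_lt (measure_mono Set.inter_subset_right) (htfin n)).ne
    have hmem : MemLp ((B.D (G.r e) ∩ B.f e ⁻¹' (s ∩ t n)).indicator
        (fun _ => (1:ℂ))) 2 μ := memLp_indicator_const 2 hmeasDf 1 (Or.inr hfinDf)
    have h0 := hinner (hmem.toLp _)
    rw [L2.inner_def] at h0
    rw [← integral_indicator hs, ← h0]
    apply integral_congr_ae
    filter_upwards [B.sOp_apply e (hmem.toLp _), B.sFun_congr e (MemLp.coeFn_toLp hmem),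
      hfi, mkFun_ae ψ] with x hx1 hx2 hx3 hx4
    rw [hx1, hx2]
    simp only [RCLike.inner_apply, SFun, hgn]
    by_cases hxR : x ∈ B.R e
    · rw [Set.indicator_of_mem hxR]
      by_cases hxst : x ∈ s ∩ t n
      · have hmemDf : B.finv e x ∈ B.D (G.r e) ∩ B.f e ⁻¹' (s ∩ t n) :=
          ⟨B.mapsTo_finv e hxR, by rw [Set.mem_preimage, hx3 hxR]; exact hxst⟩
        have hxRt : x ∈ B.R e ∩ t n := ⟨hxR, hxst.2⟩
        rw [Set.indicator_of_mem hmemDf, mul_one,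
          Set.indicator_of_mem hxst.1, Set.indicator_of_mem hxRt,
          Complex.conj_ofReal, hx4, mul_comm]
      · have hnm : B.finv e x ∉ B.D (G.r e) ∩ B.f e ⁻¹' (s ∩ t n) := by
          intro hc
          apply hxst
          rw [← hx3 hxR]
          exact hc.2
        rw [Set.indicator_of_notMem hnm, mul_zero, map_zero, mul_zero]
        by_cases hxs : x ∈ s
        · rw [Set.indicator_of_mem hxs,
            Set.indicator_of_notMem (fun hc => hxst ⟨hxs, hc.2⟩)]
        · rw [Set.indicator_of_notMem hxs]
    · rw [Set.indicator_of_notMem hxR, map_zero, mul_zero]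
      by_cases hxs : x ∈ s
      · rw [Set.indicator_of_mem hxs,
          Set.indicator_of_notMem (fun hc => hxR hc.1)]
      · rw [Set.indicator_of_notMem hxs]
  have hzero : ∀ n, gn n =ᵐ[μ] 0 := fun n =>
    ae_eq_zero_of_forall_setIntegral_eq_of_sigmaFinite
      (fun s _ _ => (hInt n).integrableOn) (hset n)
  have hψR : ⇑ψ =ᵐ[μ] (B.R e).indicator ⇑ψ := by
    have := mulInd_apply (B.R e) (B.measurableSet_R e) ψ
    rwa [h2] at this
  apply Lp.ext
  refine .trans ?_ (Lp.coeFn_zero ℂ 2 μ).symm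
  have hall : ∀ᵐ x ∂μ, ∀ n, gn n x = 0 := ae_all_iff.mpr fun n => hzero n
  filter_upwards [hall, hψR, B.phi_lt_top e, B.phi_pos_on_R e, mkFun_ae ψ]
    with x hx1 hx2 hx3 hx4 hx5
  rw [Pi.zero_apply]
  by_cases hxR : x ∈ B.R e
  · obtain ⟨n, hn⟩ : ∃ n, x ∈ t n := by
      have hx : x ∈ ⋃ n, t n := by rw [ht, iUnion_spanningSets]; trivial
      exact Set.mem_iUnion.mp hx
    have hxRt : x ∈ B.R e ∩ t n := ⟨hxR, hn⟩
    have hgx : (B.R e ∩ t n).indicator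
        (fun x => (Real.sqrt ((B.PhiFinv e x).toReal) : ℂ) * mkFun ψ x) x = 0 := hx1 n
    rw [Set.indicator_of_mem hxRt] at hgx
    have hpos : 0 < (B.PhiFinv e x).toReal := ENNReal.toReal_pos (hx4 hxR) hx3.ne
    have hsqrt : (Real.sqrt ((B.PhiFinv e x).toReal) : ℂ) ≠ 0 := by
      simp only [ne_eq, Complex.ofReal_eq_zero]
      exact (Real.sqrt_pos.mpr hpos).ne'
    rcases mul_eq_zero.mp hgx with hcase | hcase
    · exact absurd hcase hsqrt
    · rw [hx5, hcase]
  · rw [hx2, Set.indicator_of_notMem hxR]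

lemma sOp_mul_star_sOp (e : E) :
    B.SOp e * star (B.SOp e) = mulInd (B.R e) (B.measurableSet_R e) := by
  set S := B.SOp e with hS
  set M := mulInd (B.R e) (B.measurableSet_R e) with hM
  set P := mulInd (B.D (G.r e)) (B.measD e) with hP
  have hMS : M * S = S := B.mulIndR_mul_sOp e
  have hSP : S * P = S := B.sOp_mul_mulIndD e
  have hSS : star S * S = P := B.star_sOp_mul_sOp e
  have hSM : star S * M = star S := by
    have h := congrArg star hMS
    rwa [star_mul, hM, mulInd_star, ← hM] at h
  have hPS : P * star S = star S := by
    have h := congrArg star hSP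
    rwa [star_mul, hP, mulInd_star, ← hP] at h
  have hT : M - S * star S = 0 := by
    apply ContinuousLinearMap.ext; intro ψ'
    rw [ContinuousLinearMap.zero_apply]
    have hSψ : star S ((M - S * star S) ψ') = 0 := by
      have hz : star S * (M - S * star S) = 0 := by
        rw [mul_sub, hSM, ← mul_assoc, hSS, hPS, sub_self]
      calc star S ((M - S * star S) ψ') = (star S * (M - S * star S)) ψ' := by
            rw [ContinuousLinearMap.mul_apply]
        _ = 0 := by rw [hz, ContinuousLinearMap.zero_apply]
    have hMψ : M ((M - S * star S) ψ') = (M - S * star S) ψ' := by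
      have hz : M * (M - S * star S) = M - S * star S := by
        rw [mul_sub, hM, mulInd_idem, ← hM, ← mul_assoc, hMS]
      calc M ((M - S * star S) ψ') = (M * (M - S * star S)) ψ' := by
            rw [ContinuousLinearMap.mul_apply]
        _ = (M - S * star S) ψ' := by rw [hz]
    exact B.sOp_dense e _ hSψ hMψ
  have := sub_eq_zero.mp hT
  exact this.symm

lemma sum_mulInd_R (v : V) (h : {e | G.s e = v}.Finite) (hne : {e | G.s e = v}.Nonempty) :
    (∑ e ∈ h.toFinset,
        (mulInd (B.R e) (B.measurableSet_R e) : Lp ℂ 2 μ →L[ℂ] Lp ℂ 2 μ))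
      = mulInd (B.D {v}) (B.measurableSet_D _ (InG0.singleton v)) := by
  apply clm_ext_ae; intro φ
  have hsum : ⇑((∑ e ∈ h.toFinset,
      (mulInd (B.R e) (B.measurableSet_R e) : Lp ℂ 2 μ →L[ℂ] Lp ℂ 2 μ)) φ)
      =ᵐ[μ] fun x => ∑ e ∈ h.toFinset, (B.R e).indicator ⇑φ x := by
    rw [ContinuousLinearMap.sum_apply]
    refine (Lp_coeFn_sum _ _).trans ?_
    have hae : ∀ᵐ x ∂μ, ∀ e ∈ (h.toFinset : Set E),
        ⇑(mulInd (B.R e) (B.measurableSet_R e) φ) x = (B.R e).indicator ⇑φ x := by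
      rw [ae_ball_iff h.toFinset.countable_toSet]
      intro e _
      exact mulInd_apply _ _ φ
    filter_upwards [hae] with x hx
    exact Finset.sum_congr rfl fun e he => hx e (Finset.mem_coe.mpr he)
  refine hsum.trans ?_
  refine .trans ?_ (mulInd_apply _ _ φ).symm
  have hU : ∀ᵐ x ∂μ, (x ∈ B.D {v} ↔ x ∈ ⋃ e ∈ {e | G.s e = v}, B.R e) :=
    eventuallyEq_set.mp (B.D_eq_iUnion v h hne)
  have hdisj : ∀ᵐ x ∂μ, ∀ e ∈ (h.toFinset : Set E), ∀ e' ∈ (h.toFinset : Set E),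
      e ≠ e' → x ∉ B.R e ∩ B.R e' := by
    rw [ae_ball_iff h.toFinset.countable_toSet]
    intro e _
    rw [ae_ball_iff h.toFinset.countable_toSet]
    intro e' _
    by_cases hee : e = e'
    · subst hee
      filter_upwards with x hne'
      exact absurd rfl hne'
    · filter_upwards [measure_eq_zero_iff_ae_notMem.mp (B.ae_disjoint e e' hee)] with x hx _
      exact hx
  filter_upwards [hU, hdisj] with x hx hd
  by_cases hxD : x ∈ B.D {v}
  · obtain ⟨e₀, he₀v, hxe₀⟩ : ∃ e₀, G.s e₀ = v ∧ x ∈ B.R e₀ := by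
      have hm := hx.mp hxD
      simp only [Set.mem_iUnion] at hm
      obtain ⟨e₀, he, hxe⟩ := hm
      exact ⟨e₀, he, hxe⟩
    have he₀F : e₀ ∈ h.toFinset := h.mem_toFinset.mpr he₀v
    rw [Finset.sum_eq_single_of_mem e₀ he₀F, Set.indicator_of_mem hxe₀,
      Set.indicator_of_mem hxD]
    intro e he hne'
    apply Set.indicator_of_notMem
    intro hxe
    exact hd e (Finset.mem_coe.mpr he) e₀ (Finset.mem_coe.mpr he₀F) hne' ⟨hxe, hxe₀⟩
  · rw [Set.indicator_of_notMem hxD]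
    apply Finset.sum_eq_zero
    intro e he
    apply Set.indicator_of_notMem
    intro hxe
    apply hxD
    apply hx.mpr
    exact Set.mem_biUnion (h.mem_toFinset.mp he) hxe

end BranchingSystem

end BS

/-- The operators induced by a branching system form a Cuntz–Krieger `G`-family on
`L²(X,μ)`. -/
theorem branchingSystem_induces_CKFamily
    {V E : Type*} {G : Ultragraph V E} {X : Type*} [MeasurableSpace X]
    {μ : Measure X} [SigmaFinite μ] (B : BranchingSystem G X μ) :
    ∃ (P : Set V → (Lp ℂ 2 μ →L[ℂ] Lp ℂ 2 μ)) (S : E → (Lp ℂ 2 μ →L[ℂ] Lp ℂ 2 μ)),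
      (∀ A, G.InG0 A → ∀ φ : Lp ℂ 2 μ, ⇑(P A φ) =ᵐ[μ] (B.D A).indicator ⇑φ) ∧
      (∀ e, ∀ φ : Lp ℂ 2 μ, ⇑(S e φ) =ᵐ[μ] B.SFun e ⇑φ) ∧
      P ∅ = 0 ∧
      (∀ A, G.InG0 A → star (P A) = P A ∧ P A * P A = P A) ∧
      (∀ A A', G.InG0 A → G.InG0 A' → P A * P A' = P (A ∩ A')) ∧
      (∀ A A', G.InG0 A → G.InG0 A' → P (A ∪ A') = P A + P A' - P (A ∩ A')) ∧
      (∀ e, S e * star (S e) * S e = S e) ∧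
      (∀ e e', e ≠ e' → star (S e) * S e' = 0) ∧
      (∀ e, star (S e) * S e = P (G.r e)) ∧
      (∀ e, (P {G.s e} - S e * star (S e)).IsPositive) ∧
      ∀ v, (h : {e | G.s e = v}.Finite) → {e | G.s e = v}.Nonempty →
        P {v} = ∑ e ∈ h.toFinset, S e * star (S e) := by
  classical
  set P : Set V → (Lp ℂ 2 μ →L[ℂ] Lp ℂ 2 μ) := fun A =>
    if h : G.InG0 A then mulInd (B.D A) (B.measurableSet_D A h) else 0 with hPdef
  have hPA : ∀ A (hA : G.InG0 A), P A = mulInd (B.D A) (B.measurableSet_D A hA) :=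
    fun A hA => dif_pos hA
  refine ⟨P, fun e => B.SOp e, ?_, ?_, ?_, ?_, ?_, ?_, ?_, ?_, ?_, ?_, ?_⟩
  · -- P apply
    intro A hA φ
    rw [hPA A hA]
    exact mulInd_apply _ _ φ
  · -- S apply
    exact fun e φ => B.sOp_apply e φ
  · -- P ∅ = 0
    rw [hPA ∅ InG0.empty]
    apply clm_ext_ae; intro φ
    rw [ContinuousLinearMap.zero_apply]
    refine (mulInd_apply _ _ φ).trans ?_
    rw [B.D_empty]
    refine .trans (ae_of_all _ fun x => ?_) (Lp.coeFn_zero ℂ 2 μ).symm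
    simp
  · -- star and idempotent
    intro A hA
    rw [hPA A hA]
    exact ⟨mulInd_star _ _, mulInd_idem _ _⟩
  · -- products
    intro A A' hA hA'
    rw [hPA A hA, hPA A' hA', hPA _ (hA.inter hA'), mulInd_comp]
    exact mulInd_congr _ _ (B.D_inter A A' hA hA')
  · -- unions
    intro A A' hA hA'
    rw [hPA _ (hA.union hA'), hPA A hA, hPA A' hA', hPA _ (hA.inter hA')]
    rw [mulInd_congr (B.measurableSet_D _ (hA.union hA'))
      ((B.measurableSet_D A hA).union (B.measurableSet_D A' hA'))
      (B.D_union A A' hA hA').symm]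
    rw [mulInd_union (B.measurableSet_D A hA) (B.measurableSet_D A' hA')]
    congr 1
    exact mulInd_congr _ _ (B.D_inter A A' hA hA')
  · -- partial isometries
    intro e
    rw [mul_assoc, B.star_sOp_mul_sOp e]
    exact B.sOp_mul_mulIndD e
  · -- orthogonal ranges
    exact fun e e' hne => B.star_sOp_mul_sOp_ne e e' hne
  · -- S* S = P (r e)
    intro e
    rw [hPA _ (InG0.range e)]
    exact B.star_sOp_mul_sOp e
  · -- positivity
    intro e
    rw [hPA _ (InG0.singleton (G.s e))]
    set M := mulInd (B.D {G.s e}) (B.measurableSet_D _ (InG0.singleton (G.s e))) with hM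
    set S := B.SOp e with hS
    set Q := S * star S with hQ
    have hMS : M * S = S := B.mulIndS_mul_sOp e
    have hQstar : star Q = Q := by rw [hQ, star_mul, star_star]
    have hMstar : star M = M := by rw [hM]; exact mulInd_star _ _
    have hMQ : M * Q = Q := by rw [hQ, ← mul_assoc, hMS]
    have hQM : Q * M = Q := by
      have h := congrArg star hMQ
      rwa [star_mul, hQstar, hMstar] at h
    have hSP : S * mulInd (B.D (G.r e)) (B.measD e) = S := B.sOp_mul_mulIndD e
    have hPDS : mulInd (B.D (G.r e)) (B.measD e) * star S = star S := by
      have hst := congrArg star hSP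
      rwa [star_mul, mulInd_star] at hst
    have hQQ : Q * Q = Q := by
      rw [hQ, mul_assoc, ← mul_assoc (star S) S (star S), B.star_sOp_mul_sOp e, hPDS]
    have hMM : M * M = M := by rw [hM]; exact mulInd_idem _ _
    have hRstar : star (M - Q) = M - Q := by rw [star_sub, hQstar, hMstar]
    have hRR : (M - Q) * (M - Q) = M - Q := by
      rw [sub_mul, mul_sub, mul_sub, hMM, hMQ, hQM, hQQ, sub_self, sub_zero]
    constructor
    · exact ContinuousLinearMap.isSelfAdjoint_iff_isSymmetric.mp hRstar
    · intro φ
      have happ : ((M - Q) φ) = (M - Q) ((M - Q) φ) := by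
        conv_lhs => rw [← hRR, ContinuousLinearMap.mul_apply]
      have key : (inner ℂ ((M - Q) φ) φ : ℂ) = inner ℂ ((M - Q) φ) ((M - Q) φ) :=
        calc (inner ℂ ((M - Q) φ) φ : ℂ)
            = inner ℂ ((M - Q) ((M - Q) φ)) φ := by rw [← happ]
          _ = inner ℂ ((ContinuousLinearMap.adjoint (M - Q)) ((M - Q) φ)) φ := by
              rw [← ContinuousLinearMap.star_eq_adjoint, hRstar]
          _ = inner ℂ ((M - Q) φ) ((M - Q) φ) :=
              ContinuousLinearMap.adjoint_inner_left _ _ _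
      have : (M - Q).reApplyInnerSelf φ = ‖(M - Q) φ‖ ^ 2 := by
        rw [ContinuousLinearMap.reApplyInnerSelf_apply, key, inner_self_eq_norm_sq]
      rw [this]
      positivity
  · -- CK condition
    intro v hfin hne
    rw [hPA _ (InG0.singleton v), ← B.sum_mulInd_R v hfin hne]
    apply Finset.sum_congr rfl
    intro e _
    exact (B.sOp_mul_star_sOp e).symm

end Ultragraph
end

section
/- Every G-branching system {R_e, D_A, f_e} on a σ-finite measure space (X, μ) is nonsingular: there exists a nonsingular measurable map F : X → X such that F restricted to R_e equals f_e⁻¹ μ-almost everywhere, for every edge e. -/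
open MeasureTheory Filter Set
open scoped ENNReal

universe u v w

namespace Ultragraph

/-- Every branching system is nonsingular: there is a nonsingular measurable map `F`
agreeing with `f_e⁻¹` a.e. on each `R_e`. -/
theorem branchingSystem_nonsingular
    {V E : Type*} {G : Ultragraph V E} {X : Type*} [MeasurableSpace X]
    {μ : Measure X} [SigmaFinite μ] (B : BranchingSystem G X μ) :
    ∃ F : X → X, Measurable F ∧
      (∀ S : Set X, MeasurableSet S → μ S = 0 → μ (F ⁻¹' S) = 0) ∧
      ∀ e, ∀ᵐ x ∂μ.restrict (B.R e), F x = B.finv e x := by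
  classical
  rcases isEmpty_or_nonempty E with hE | hE
  · refine ⟨id, measurable_id, fun S _ hS => by simpa using hS, fun e => isEmptyElim e⟩
  · obtain ⟨e₀⟩ := hE
    -- only countably many `R e` have positive measure
    have hcnt : Set.Countable {e : E | 0 < μ (B.R e)} :=
      MeasureTheory.Measure.countable_meas_pos_of_disjoint_iUnion₀
        (fun e => (B.measurableSet_R e).nullMeasurableSet)
        (fun e e' h => B.ae_disjoint e e' h)
    obtain ⟨g, hg⟩ := (hcnt.insert e₀).exists_eq_range (insert_nonempty _ _)
    have hTg : {e : E | 0 < μ (B.R e)} ⊆ Set.range g := by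
      rw [← hg]; exact subset_insert _ _
    set U : Set X := ⋃ n, B.R (g n) with hU
    have htot : ∀ x, ∃ n, x ∈ B.R (g n) ∨ x ∉ U := by
      intro x
      by_cases hx : x ∈ U
      · obtain ⟨n, hn⟩ := mem_iUnion.1 hx; exact ⟨n, Or.inl hn⟩
      · exact ⟨0, Or.inr hx⟩
    set f : ℕ → X → X := fun n x => if x ∈ B.R (g n) then B.finv (g n) x else x with hf
    set F : X → X := fun x => f (Nat.find (htot x)) x with hF
    have hFmeas : Measurable F := by
      apply Measurable.find (f := f) (p := fun n x => x ∈ B.R (g n) ∨ x ∉ U)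
      · intro n
        exact Measurable.ite (B.measurableSet_R (g n)) (B.measurable_finv (g n)) measurable_id
      · intro n
        exact (B.measurableSet_R (g n)).union
          (MeasurableSet.compl (MeasurableSet.iUnion fun m => B.measurableSet_R (g m)))
    -- key pointwise facts
    have hmemU : ∀ x, x ∈ U → x ∈ B.R (g (Nat.find (htot x))) ∧
        F x = B.finv (g (Nat.find (htot x))) x := by
      intro x hx
      have hspec := Nat.find_spec (htot x)
      have hxm : x ∈ B.R (g (Nat.find (htot x))) := hspec.resolve_right (not_not_intro hx)
      exact ⟨hxm, by simp only [hF, hf, if_pos hxm]⟩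
    have hnotU : ∀ x, x ∉ U → F x = x := by
      intro x hx
      have : x ∉ B.R (g (Nat.find (htot x))) := fun h => hx (mem_iUnion.2 ⟨_, h⟩)
      simp only [hF, hf, if_neg this]
    -- measure of `R e ∩ finv e ⁻¹' S` for null `S`
    have hkey : ∀ (e : E) (S : Set X), MeasurableSet S → μ S = 0 →
        μ (B.R e ∩ B.finv e ⁻¹' S) = 0 := by
      intro e S hSm hS0
      have h1 : μ (B.R e ∩ B.finv e ⁻¹' S) = μ.restrict (B.R e) (B.finv e ⁻¹' S) := by
        rw [Measure.restrict_apply (hSm.preimage (B.measurable_finv e)), inter_comm]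
      have h2 : μ.restrict (B.R e) (B.finv e ⁻¹' S) =
          ((μ.restrict (B.R e)).map (B.finv e)) S := by
        rw [Measure.map_apply (B.measurable_finv e) hSm]
      rw [h1, h2]
      exact B.pushforward_f_ac e (le_antisymm (le_trans (Measure.restrict_le_self S) hS0.le)
        zero_le)
    refine ⟨F, hFmeas, ?_, ?_⟩
    · intro S hSm hS0
      have hsub : F ⁻¹' S ⊆ (⋃ n, B.R (g n) ∩ B.finv (g n) ⁻¹' S) ∪ S := by
        intro x hx
        by_cases hxU : x ∈ U
        · obtain ⟨hxm, hFx⟩ := hmemU x hxU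
          exact Or.inl (mem_iUnion.2 ⟨_, hxm, by rwa [mem_preimage, ← hFx]⟩)
        · exact Or.inr (by rwa [← hnotU x hxU])
      refine measure_mono_null hsub (measure_union_null ?_ hS0)
      exact measure_iUnion_null fun n => hkey (g n) S hSm hS0
    · intro e
      rw [ae_restrict_iff' (B.measurableSet_R e)]
      -- bad set is contained in a null set
      set N : Set X := (B.R e \ U) ∪ ⋃ n, (if g n = e then (∅ : Set X) else B.R (g n) ∩ B.R e)
        with hN
      have hNnull : μ N = 0 := by
        refine measure_union_null ?_ (measure_iUnion_null fun n => ?_)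
        · by_cases hpos : 0 < μ (B.R e)
          · obtain ⟨k, hk⟩ := hTg hpos
            have : B.R e ⊆ U := hk ▸ subset_iUnion (fun n => B.R (g n)) k
            simp [diff_eq_empty.2 this]
          · exact measure_mono_null diff_subset (by simpa using hpos)
        · by_cases h : g n = e
          · simp [h]
          · simpa [h] using B.ae_disjoint (g n) e h
      refine measure_mono_null ?_ hNnull
      intro x hx
      simp only [mem_setOf_eq] at hx
      by_contra hxN
      apply hx; intro hxe
      by_cases hxU : x ∈ U
      · obtain ⟨hxm, hFx⟩ := hmemU x hxU
        by_cases h : g (Nat.find (htot x)) = e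
        · rw [hFx, h]
        · exact absurd (Or.inr (mem_iUnion.2 ⟨Nat.find (htot x), by
            simp [h, hxm, hxe]⟩)) hxN
      · exact absurd (Or.inl ⟨hxe, hxU⟩) hxN


end Ultragraph
end

section
/- With the hypotheses of the previous statement, if φ ∈ L²(X, μ) has support contained μ-a.e. in the countable union ⋃_{i=1}^∞ R_{e_i}, then P_F(φ²) = lim_{n→∞} Σ_{i=1}^{n} (Φ_{f_{e_i}}^{1/2}·(φ∘f_{e_i}))² with convergence in the L¹(X, μ) norm. -/
open MeasureTheory Filter Set
open scoped ENNReal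

universe u v w

namespace Ultragraph


section Aux

variable {V : Type u} {E : Type v} {G : Ultragraph V E} {X : Type w} [MeasurableSpace X]
  {μ : Measure X}

/-- `S_e^* φ` without the complex coercion, as a real function. -/
noncomputable def BranchingSystem.psiAux (B : BranchingSystem G X μ) (e : E) (φ : X → ℝ) :
    X → ℝ :=
  fun x => (B.D (G.r e)).indicator
    (fun y => Real.sqrt ((B.PhiF e y).toReal) * φ (B.f e y)) x

lemma BranchingSystem.sigmaFinite_map [SigmaFinite μ] (B : BranchingSystem G X μ) (e : E) :
    SigmaFinite ((μ.restrict (B.R e)).map (B.finv e)) := by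
  refine ⟨⟨⟨fun n => B.f e ⁻¹' spanningSets μ n, fun _ => Set.mem_univ _, fun n => ?_, ?_⟩⟩⟩
  · rw [Measure.map_apply (B.measurable_finv e)
      ((B.measurable_f e) (measurableSet_spanningSets μ n))]
    have h1 : (B.finv e ⁻¹' (B.f e ⁻¹' spanningSets μ n) : Set X)
        =ᵐ[μ.restrict (B.R e)] (spanningSets μ n : Set X) := by
      rw [Filter.eventuallyEq_set]
      filter_upwards [B.f_finv e] with x hx
      simp [Set.mem_preimage, hx]
    rw [measure_congr h1, Measure.restrict_apply (measurableSet_spanningSets μ n)]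
    exact (measure_mono Set.inter_subset_left).trans_lt (measure_spanningSets_lt_top μ n)
  · rw [← Set.preimage_iUnion, iUnion_spanningSets, Set.preimage_univ]

lemma BranchingSystem.setLIntegral_edge [SigmaFinite μ] (B : BranchingSystem G X μ) (e : E)
    {F : X → X} (hF : Measurable F) (hFR : ∀ᵐ x ∂μ.restrict (B.R e), F x = B.finv e x)
    {φ : X → ℝ} (hφ : Measurable φ) {S : Set X} (hS : MeasurableSet S) :
    ∫⁻ x in S, ENNReal.ofReal ((B.psiAux e φ x) ^ 2) ∂μ
      = ∫⁻ x in F ⁻¹' S ∩ B.R e, ENNReal.ofReal ((φ x) ^ 2) ∂μ := by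
  set ν := (μ.restrict (B.R e)).map (B.finv e) with hν
  haveI : SigmaFinite ν := B.sigmaFinite_map e
  have hac : ν ≪ μ := (B.pushforward_f_ac e).trans
    (Measure.absolutelyContinuous_of_le Measure.restrict_le_self)
  have hD : MeasurableSet (B.D (G.r e)) := B.measurableSet_D _ (InG0.range e)
  set h : X → ℝ≥0∞ :=
    fun x => (B.D (G.r e)).indicator (fun y => ENNReal.ofReal (φ (B.f e y) ^ 2)) x with hh
  have hmh : Measurable h :=
    Measurable.indicator (((hφ.comp (B.measurable_f e)).pow_const 2).ennreal_ofReal) hD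
  have h1 : (fun x => ENNReal.ofReal ((B.psiAux e φ x) ^ 2))
      =ᵐ[μ] fun x => ν.rnDeriv μ x * h x := by
    filter_upwards [Measure.rnDeriv_lt_top ν μ] with x hx
    by_cases hxD : x ∈ B.D (G.r e)
    · simp only [BranchingSystem.psiAux, Set.indicator_of_mem hxD, hh]
      rw [mul_pow, Real.sq_sqrt ENNReal.toReal_nonneg,
        ENNReal.ofReal_mul ENNReal.toReal_nonneg]
      have : B.PhiF e x = ν.rnDeriv μ x := rfl
      rw [this, ENNReal.ofReal_toReal hx.ne]
    · simp [BranchingSystem.psiAux, Set.indicator_of_notMem hxD, hh]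
  calc ∫⁻ x in S, ENNReal.ofReal ((B.psiAux e φ x) ^ 2) ∂μ
      = ∫⁻ x in S, ν.rnDeriv μ x * h x ∂μ := lintegral_congr_ae (ae_restrict_of_ae h1)
    _ = ∫⁻ x in S, h x ∂ν := setLIntegral_rnDeriv_mul hac hmh.aemeasurable hS
    _ = ∫⁻ x, S.indicator h x ∂ν := (lintegral_indicator hS h).symm
    _ = ∫⁻ x, S.indicator h (B.finv e x) ∂(μ.restrict (B.R e)) :=
        lintegral_map (hmh.indicator hS) (B.measurable_finv e)
    _ = ∫⁻ x, (F ⁻¹' S).indicator (fun y => ENNReal.ofReal (φ y ^ 2)) x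
          ∂(μ.restrict (B.R e)) := by
        refine lintegral_congr_ae ?_
        filter_upwards [B.f_finv e, hFR, ae_restrict_mem (B.measurableSet_R e)]
          with x hfx hFx hxR
        have hDx : B.finv e x ∈ B.D (G.r e) := B.mapsTo_finv e hxR
        by_cases hxS : F x ∈ S
        · have hxS' : B.finv e x ∈ S := by rw [← hFx]; exact hxS
          simp [Set.indicator_of_mem, hxS', hxS, hh, hDx, hfx, Set.mem_preimage]
        · have hxS' : B.finv e x ∉ S := by rw [← hFx]; exact hxS
          simp [Set.indicator_of_notMem, hxS', hxS, Set.mem_preimage]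
    _ = ∫⁻ x in F ⁻¹' S, ENNReal.ofReal (φ x ^ 2) ∂(μ.restrict (B.R e)) :=
        lintegral_indicator (hF hS) _
    _ = ∫⁻ x in F ⁻¹' S ∩ B.R e, ENNReal.ofReal ((φ x) ^ 2) ∂μ := by
        rw [Measure.restrict_restrict (hF hS)]

end Aux

/-- The Perron–Frobenius operator in terms of the branching system: countably supported
case, with convergence in the `L¹`-norm. -/
theorem perronFrobenius_of_countable_support
    {V E : Type*} {G : Ultragraph V E} {X : Type*} [MeasurableSpace X]
    {μ : Measure X} [SigmaFinite μ] (B : BranchingSystem G X μ)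
    (F : X → X) (hF : Measurable F)
    (hns : ∀ S : Set X, MeasurableSet S → μ S = 0 → μ (F ⁻¹' S) = 0)
    (hFR : ∀ e, ∀ᵐ x ∂μ.restrict (B.R e), F x = B.finv e x)
    (PF : Lp ℝ 1 μ →L[ℝ] Lp ℝ 1 μ)
    (hPF : ∀ (ψ : Lp ℝ 1 μ) (S : Set X), MeasurableSet S →
      ∫ x in S, (PF ψ) x ∂μ = ∫ x in F ⁻¹' S, ψ x ∂μ)
    (es : ℕ → E) (hinj : Function.Injective es) (φ : Lp ℝ 2 μ)
    (hsupp : ∀ᵐ x ∂μ, φ x ≠ 0 → x ∈ ⋃ i, B.R (es i))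
    (φsq : Lp ℝ 1 μ) (hφsq : ⇑φsq =ᵐ[μ] fun x => (φ x) ^ 2) :
    Filter.Tendsto (fun N : ℕ =>
        ∫ x, |(PF φsq) x - ∑ i ∈ Finset.range N,
          ((B.D (G.r (es i))).indicator
            (fun y => Real.sqrt ((B.PhiF (es i) y).toReal) * φ (B.f (es i) y)) x) ^ 2| ∂μ)
      Filter.atTop (nhds 0) := by
  classical
  have φm : Measurable (⇑φ) := (Lp.stronglyMeasurable φ).measurable
  have pm : Measurable (⇑(PF φsq)) := (Lp.stronglyMeasurable _).measurable
  suffices h : Tendsto (fun N : ℕ =>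
      ∫ x, |(PF φsq) x - ∑ i ∈ Finset.range N, (B.psiAux (es i) ⇑φ x) ^ 2| ∂μ)
      atTop (nhds 0) from h
  set q : X → ℝ≥0∞ := fun x => ENNReal.ofReal ((φ x) ^ 2) with hq
  have qm : Measurable q := (φm.pow_const 2).ennreal_ofReal
  have ψm : ∀ i : ℕ, Measurable (B.psiAux (es i) ⇑φ) := fun i =>
    Measurable.indicator
      ((Real.continuous_sqrt.measurable.comp
        ((Measure.measurable_rnDeriv _ _).ennreal_toReal)).mul
        (φm.comp (B.measurable_f _)))
      (B.measurableSet_D _ (InG0.range _))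
  set u : ℕ → X → ℝ≥0∞ := fun i x => ENNReal.ofReal ((B.psiAux (es i) ⇑φ x) ^ 2) with hu
  have um : ∀ i, Measurable (u i) := fun i => ((ψm i).pow_const 2).ennreal_ofReal
  set Gf : X → ℝ≥0∞ := fun x => ∑' i, u i x with hGf
  have Gm : Measurable Gf := Measurable.ennreal_tsum um
  -- the key set-lintegral identity
  have key : ∀ S : Set X, MeasurableSet S →
      ∫⁻ x in S, Gf x ∂μ = ∫⁻ x in F ⁻¹' S, q x ∂μ := by
    intro S hS
    have h1 : ∫⁻ x in S, Gf x ∂μ = ∑' i, ∫⁻ x in S, u i x ∂μ :=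
      lintegral_tsum fun i => (um i).aemeasurable
    have h2 : ∀ i, ∫⁻ x in S, u i x ∂μ = ∫⁻ x in F ⁻¹' S ∩ B.R (es i), q x ∂μ := fun i =>
      B.setLIntegral_edge (es i) hF (hFR (es i)) φm hS
    have h3 : ∫⁻ x in ⋃ i, (F ⁻¹' S ∩ B.R (es i)), q x ∂μ
        = ∑' i, ∫⁻ x in F ⁻¹' S ∩ B.R (es i), q x ∂μ := by
      refine lintegral_iUnion₀
        (fun i => ((hF hS).inter (B.measurableSet_R _)).nullMeasurableSet) ?_ q
      intro i j hij
      exact MeasureTheory.AEDisjoint.mono (B.ae_disjoint _ _ fun hc => hij (hinj hc))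
        Set.inter_subset_right Set.inter_subset_right
    have h4 : ∫⁻ x in ⋃ i, (F ⁻¹' S ∩ B.R (es i)), q x ∂μ = ∫⁻ x in F ⁻¹' S, q x ∂μ := by
      rw [← Set.inter_iUnion,
        ← lintegral_indicator ((hF hS).inter (MeasurableSet.iUnion fun i =>
          B.measurableSet_R (es i))) q,
        ← lintegral_indicator (hF hS) q]
      refine lintegral_congr_ae ?_
      filter_upwards [hsupp] with x hx
      by_cases hxU : x ∈ ⋃ i, B.R (es i)
      · by_cases hxS : x ∈ F ⁻¹' S <;>
          simp [Set.indicator_apply, hxU, hxS]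
      · have hφ0 : φ x = 0 := by by_contra hne; exact hxU (hx hne)
        by_cases hxS : x ∈ F ⁻¹' S <;>
          simp [Set.indicator_apply, hxU, hxS, hq, hφ0]
    rw [h1, tsum_congr h2, ← h3, h4]
  -- finiteness
  have hInt2 : Integrable (fun x => (φ x) ^ 2) μ := (L1.integrable_coeFn φsq).congr hφsq
  have hqfin : ∫⁻ x, q x ∂μ < ∞ :=
    (hasFiniteIntegral_iff_ofReal (Eventually.of_forall fun x => sq_nonneg _)).1 hInt2.2
  have hGfin : ∫⁻ x, Gf x ∂μ < ∞ := by
    have hk := key Set.univ MeasurableSet.univ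
    rw [Set.preimage_univ, Measure.restrict_univ] at hk
    rw [hk]; exact hqfin
  -- nonnegativity of PF φsq
  have hpos : 0 ≤ᵐ[μ] ⇑(PF φsq) := by
    refine ae_nonneg_of_forall_setIntegral_nonneg (L1.integrable_coeFn _)
      fun s hs hμs => ?_
    rw [hPF φsq s hs]
    exact integral_nonneg_of_ae
      (ae_restrict_of_ae (hφsq.mono fun x hx => by rw [hx]; exact sq_nonneg _))
  -- a.e. identification of PF φsq with Gf
  have hae : (fun x => ENNReal.ofReal ((PF φsq) x)) =ᵐ[μ] Gf := by
    refine ae_eq_of_forall_setLIntegral_eq_of_sigmaFinite pm.ennreal_ofReal Gm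
      fun s hs hμs => ?_
    rw [key s hs]
    rw [← ofReal_integral_eq_lintegral_ofReal ((L1.integrable_coeFn (PF φsq)).restrict)
      (ae_restrict_of_ae hpos), hPF φsq s hs,
      integral_congr_ae (ae_restrict_of_ae hφsq),
      ofReal_integral_eq_lintegral_ofReal (hInt2.restrict)
      (ae_restrict_of_ae (Eventually.of_forall fun x => sq_nonneg _))]
  have hGlt : ∀ᵐ x ∂μ, Gf x < ∞ := ae_lt_top Gm hGfin.ne
  set P : ℕ → X → ℝ≥0∞ := fun N x => ∑ i ∈ Finset.range N, u i x with hP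
  have hPle : ∀ N x, P N x ≤ Gf x := fun N x => ENNReal.sum_le_tsum _
  have hPm : ∀ N, Measurable (P N) := fun N => Finset.measurable_sum _ fun i _ => um i
  -- identification of the L¹ distance
  have claim1 : ∀ N : ℕ, ∫ x, |(PF φsq) x - ∑ i ∈ Finset.range N, (B.psiAux (es i) ⇑φ x) ^ 2| ∂μ
      = (∫⁻ x, (Gf x - P N x) ∂μ).toReal := by
    intro N
    rw [integral_eq_lintegral_of_nonneg_ae (f := fun x => |(PF φsq) x - ∑ i ∈ Finset.range N, (B.psiAux (es i) ⇑φ x) ^ 2|) (Eventually.of_forall fun x => abs_nonneg _)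
      ((pm.sub (Finset.measurable_sum _ fun i _ => (ψm i).pow_const 2)).abs).aestronglyMeasurable]
    congr 1
    refine lintegral_congr_ae ?_
    filter_upwards [hae, hGlt, hpos] with x hx hlt hp
    have hfin : ∀ i, u i x ≠ ∞ := fun i => ENNReal.ofReal_ne_top
    have hpx : (PF φsq) x = (Gf x).toReal := by
      have h := congrArg ENNReal.toReal hx
      rwa [ENNReal.toReal_ofReal hp] at h
    have hPNx : (P N x).toReal = ∑ i ∈ Finset.range N, (B.psiAux (es i) ⇑φ x) ^ 2 := by
      rw [hP, ENNReal.toReal_sum fun i _ => hfin i]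
      exact Finset.sum_congr rfl fun i _ => ENNReal.toReal_ofReal (sq_nonneg _)
    have hle : ∑ i ∈ Finset.range N, (B.psiAux (es i) ⇑φ x) ^ 2 ≤ (PF φsq) x := by
      rw [hpx, ← hPNx]
      exact ENNReal.toReal_mono hlt.ne (hPle N x)
    rw [abs_of_nonneg (sub_nonneg.2 hle), hpx, ← hPNx,
      ← ENNReal.toReal_sub_of_le (hPle N x) hlt.ne]
    exact ENNReal.ofReal_toReal (tsub_le_self.trans_lt hlt).ne
  -- convergence of the lintegrals
  have hIsum : ∀ N, ∫⁻ x, P N x ∂μ = ∑ i ∈ Finset.range N, ∫⁻ x, u i x ∂μ := fun N =>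
    lintegral_finset_sum _ fun i _ => um i
  have hGsum : ∫⁻ x, Gf x ∂μ = ∑' i, ∫⁻ x, u i x ∂μ :=
    lintegral_tsum fun i => (um i).aemeasurable
  have hS : Tendsto (fun N => ∫⁻ x, P N x ∂μ) atTop (nhds (∫⁻ x, Gf x ∂μ)) := by
    simp only [hIsum, hGsum]
    exact ENNReal.tendsto_nat_tsum _
  have claim2 : Tendsto (fun N => ∫⁻ x, (Gf x - P N x) ∂μ) atTop (nhds 0) := by
    have hsub : ∀ N, ∫⁻ x, (Gf x - P N x) ∂μ = ∫⁻ x, Gf x ∂μ - ∫⁻ x, P N x ∂μ := fun N =>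
      lintegral_sub (hPm N) ((lintegral_mono (hPle N)).trans_lt hGfin).ne
        (Eventually.of_forall (hPle N))
    simp only [hsub]
    have := ENNReal.Tendsto.sub (tendsto_const_nhds
      (x := ∫⁻ x, Gf x ∂μ) (f := atTop)) hS (Or.inl hGfin.ne)
    simpa using this
  have hfuneq : (fun N : ℕ =>
      ∫ x, |(PF φsq) x - ∑ i ∈ Finset.range N, (B.psiAux (es i) ⇑φ x) ^ 2| ∂μ)
      = fun N => (∫⁻ x, (Gf x - P N x) ∂μ).toReal := funext claim1
  rw [hfuneq]
  have := (ENNReal.tendsto_toReal (a := 0) (by simp)).comp claim2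
  simpa [Function.comp_def] using this

end Ultragraph
end

section
/- Let π : C*(G) → B(H) be a permutative representation of an ultragraph C*-algebra with distinguished orthonormal bases B, B_v, B_{r(e)}, B_e. For A ∈ 𝒢⁰ written as A = (⋂_{e∈X₁} r(e)) ∪ ⋯ ∪ (⋂_{e∈Xₙ} r(e)) ∪ F, the set B_A := (⋂_{e∈X₁} B_{r(e)}) ∪ ⋯ ∪ (⋂_{e∈Xₙ} B_{r(e)}) ∪ ⋃_{v∈F} B_v is independent of the chosen decomposition of A, is an orthonormal basis of H_A = π(p_A)(H), and satisfies B_A ∩ B_C = B_{A∩C} and B_A ∪ B_C = B_{A∪C} for all A, C ∈ 𝒢⁰. -/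
open MeasureTheory Filter Set
open scoped ENNReal

universe u v w

/-- `T` is an orthonormal basis of (the closed subspace generated by) `K`. -/
def IsONBasisOf {H : Type*} [NormedAddCommGroup H] [InnerProductSpace ℂ H]
    (T : Set H) (K : Set H) : Prop :=
  T ⊆ K ∧ Orthonormal ℂ (Subtype.val : T → H) ∧
    closure (↑(Submodule.span ℂ T) : Set H) = closure K


section UGHelp

variable {H : Type*} [NormedAddCommGroup H] [InnerProductSpace ℂ H] [CompleteSpace H]

lemma UGfix_of_range {p : H →L[ℂ] H} (hp : p * p = p) {x : H} (hx : x ∈ Set.range ⇑p) :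
    p x = x := by
  obtain ⟨y, rfl⟩ := hx
  rw [← ContinuousLinearMap.mul_apply, hp]

lemma UGrange_eq_fix {p : H →L[ℂ] H} (hp : p * p = p) :
    Set.range ⇑p = {x | p x = x} := by
  ext x
  exact ⟨fun hx => UGfix_of_range hp hx, fun hx => ⟨x, hx⟩⟩

lemma UGisClosed_fix (p : H →L[ℂ] H) : IsClosed {x : H | p x = x} :=
  isClosed_eq p.continuous continuous_id

lemma UGclosure_span_le_fix (p : H →L[ℂ] H) {s : Set H} (hs : s ⊆ {x | p x = x}) :
    closure (↑(Submodule.span ℂ s) : Set H) ⊆ {x | p x = x} := by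
  apply closure_minimal _ (UGisClosed_fix p)
  intro x hx
  have h1 : Submodule.span ℂ s ≤ LinearMap.ker ((p - 1 : H →L[ℂ] H) : H →ₗ[ℂ] H) := by
    rw [Submodule.span_le]
    intro y hy
    simp only [SetLike.mem_coe, LinearMap.mem_ker, ContinuousLinearMap.coe_coe, ContinuousLinearMap.sub_apply,
      ContinuousLinearMap.one_apply, sub_eq_zero]
    exact hs hy
  have := h1 hx
  simp only [SetLike.mem_coe, LinearMap.mem_ker, ContinuousLinearMap.coe_coe, ContinuousLinearMap.sub_apply,
    ContinuousLinearMap.one_apply, sub_eq_zero] at this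
  exact this

lemma UGorthonormal_mono {s t : Set H} (ht : Orthonormal ℂ (Subtype.val : t → H))
    (hst : s ⊆ t) : Orthonormal ℂ (Subtype.val : s → H) :=
  ht.comp (Set.inclusion hst) (Set.inclusion_injective hst)

lemma UGproj_zero {B : Set H} (hB : Orthonormal ℂ (Subtype.val : B → H))
    {p : H →L[ℂ] H} (hp : p * p = p) (hps : star p = p)
    {T : Set H} (hTB : T ⊆ B)
    (hcl : closure (↑(Submodule.span ℂ T) : Set H) = closure (Set.range ⇑p))
    {b : H} (hb : b ∈ B) (hbT : b ∉ T) : p b = 0 := by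
  have hker : closure (↑(Submodule.span ℂ T) : Set H) ⊆
      {x : H | (inner ℂ b x : ℂ) = 0} := by
    apply closure_minimal
    · intro x hx
      have h1 : Submodule.span ℂ T ≤ LinearMap.ker ((innerSL ℂ b : H →L[ℂ] ℂ) : H →ₗ[ℂ] ℂ) := by
        rw [Submodule.span_le]
        intro t ht
        have hbt : b ≠ t := fun h => hbT (h ▸ ht)
        have := hB.2 (i := ⟨b, hb⟩) (j := ⟨t, hTB ht⟩)
          (fun h => hbt (congrArg Subtype.val h))
        simpa [LinearMap.mem_ker] using this
      have := h1 hx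
      simpa [LinearMap.mem_ker] using this
    · exact isClosed_eq (innerSL ℂ b).continuous continuous_const
  have hpb : (inner ℂ b (p b) : ℂ) = 0 := by
    apply hker
    rw [hcl]
    exact subset_closure ⟨b, rfl⟩
  have hadj : ContinuousLinearMap.adjoint p = p := by
    rw [← ContinuousLinearMap.star_eq_adjoint, hps]
  have h2 : (inner ℂ (p b) (p b) : ℂ) = inner ℂ b (p b) := by
    rw [← ContinuousLinearMap.adjoint_inner_right p b (p b), hadj,
      ← ContinuousLinearMap.mul_apply, hp]
  rw [hpb] at h2
  exact inner_self_eq_zero.mp h2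

end UGHelp


section UGHelp2

variable {H : Type*} [NormedAddCommGroup H] [InnerProductSpace ℂ H] [CompleteSpace H]

lemma UGbasis_unique {B : Set H} (hB : Orthonormal ℂ (Subtype.val : B → H))
    {p : H →L[ℂ] H} (hp : p * p = p) (hps : star p = p)
    {T : Set H} (hTB : T ⊆ B) (hT : IsONBasisOf T (Set.range ⇑p)) :
    T = B ∩ {x | p x = x} := by
  ext b
  constructor
  · intro hbT
    exact ⟨hTB hbT, UGfix_of_range hp (hT.1 hbT)⟩
  · rintro ⟨hbB, hbfix⟩
    by_contra hbT
    have h0 := UGproj_zero hB hp hps hTB hT.2.2 hbB hbT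
    have hb0 : b = 0 := by rw [← hbfix, h0]
    have hnorm := hB.1 ⟨b, hbB⟩
    rw [Subtype.coe_mk, hb0] at hnorm
    simp at hnorm

end UGHelp2


namespace Ultragraph

/-- For a permutative representation, `B_A` is well defined, is an orthonormal basis of
`H_A`, and respects intersections and unions. -/
theorem permutative_basis_of_G0
    {V E : Type*} {G : Ultragraph V E} {H : Type*} [NormedAddCommGroup H]
    [InnerProductSpace ℂ H] [CompleteSpace H]
    (F : CKFamily G (H →L[ℂ] H))
    (B : Set H) (Bv : V → Set H) (Bre : E → Set H) (Be : E → Set H)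
    (hB : IsONBasisOf B Set.univ)
    (hBv : ∀ v, IsONBasisOf (Bv v) (Set.range ⇑(F.P {v})))
    (hBre : ∀ e, IsONBasisOf (Bre e) (Set.range ⇑(F.P (G.r e))))
    (hBe : ∀ e, IsONBasisOf (Be e) (Set.range ⇑(F.S e * star (F.S e))))
    (hBreB : ∀ e, Bre e ⊆ B) (hBvB : ∀ v, Bv v ⊆ B)
    (hBvBre : ∀ v e, v ∈ G.r e → Bv v ⊆ Bre e)
    (hBeBv : ∀ v, (⋃ e ∈ {e | G.s e = v}, Be e) ⊆ Bv v)
    (hB2B : ∀ e, ⇑(F.S e) '' Bre e = Be e) :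
    ∃ BA : Set V → Set H,
      (∀ (A : Set V) (n : ℕ) (Xs : Fin n → Finset E) (Fv : Finset V),
        (∀ i, (Xs i).Nonempty) →
        A = (⋃ i, ⋂ e ∈ Xs i, G.r e) ∪ (Fv : Set V) →
        BA A = (⋃ i, ⋂ e ∈ Xs i, Bre e) ∪ ⋃ v ∈ Fv, Bv v) ∧
      (∀ A, G.InG0 A → IsONBasisOf (BA A) (Set.range ⇑(F.P A))) ∧
      ∀ A C, G.InG0 A → G.InG0 C →
        BA A ∩ BA C = BA (A ∩ C) ∧ BA A ∪ BA C = BA (A ∪ C) := by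
  classical
  obtain ⟨-, hBo, -⟩ := hB
  have hidem : ∀ A, G.InG0 A → F.P A * F.P A = F.P A := fun A hA => by
    simpa using F.P_mul A A hA hA
  have hsa : ∀ A, G.InG0 A → star (F.P A) = F.P A := F.P_star
  have hmono : ∀ A C, G.InG0 A → G.InG0 C → A ⊆ C →
      ∀ x : H, F.P A x = x → F.P C x = x := by
    intro A C hA hC hAC x hx
    have h1 : F.P C * F.P A = F.P A := by
      rw [F.P_mul C A hC hA, Set.inter_eq_right.mpr hAC]
    have h2 : F.P C (F.P A x) = F.P A x := by
      rw [← ContinuousLinearMap.mul_apply, h1]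
    rwa [hx] at h2
  have hBAinter : ∀ A C, G.InG0 A → G.InG0 C →
      (B ∩ {x | F.P A x = x}) ∩ (B ∩ {x | F.P C x = x})
        = B ∩ {x | F.P (A ∩ C) x = x} := by
    intro A C hA hC
    ext b
    simp only [Set.mem_inter_iff, Set.mem_setOf_eq]
    constructor
    · rintro ⟨⟨hbB, hA'⟩, -, hC'⟩
      refine ⟨hbB, ?_⟩
      have h3 : F.P (A ∩ C) b = F.P A (F.P C b) := by
        rw [← ContinuousLinearMap.mul_apply, F.P_mul A C hA hC]
      rw [h3, hC', hA']
    · rintro ⟨hbB, hAC⟩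
      exact ⟨⟨hbB, hmono (A ∩ C) A (hA.inter hC) hA Set.inter_subset_left b hAC⟩,
             ⟨hbB, hmono (A ∩ C) C (hA.inter hC) hC Set.inter_subset_right b hAC⟩⟩
  have hred : ∀ A, G.InG0 A →
      ({x | F.P A x = x} ⊆
        closure (↑(Submodule.span ℂ (B ∩ {x | F.P A x = x})) : Set H)) →
      IsONBasisOf (B ∩ {x | F.P A x = x}) (Set.range ⇑(F.P A)) := by
    intro A hA hsur
    refine ⟨fun x hx => ⟨x, hx.2⟩, UGorthonormal_mono hBo Set.inter_subset_left, ?_⟩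
    rw [UGrange_eq_fix (hidem A hA), IsClosed.closure_eq (UGisClosed_fix _)]
    exact Set.Subset.antisymm (UGclosure_span_le_fix _ fun x hx => hx.2) hsur
  have hfix_eq : ∀ A, G.InG0 A →
      IsONBasisOf (B ∩ {x | F.P A x = x}) (Set.range ⇑(F.P A)) →
      {x | F.P A x = x}
        = closure (↑(Submodule.span ℂ (B ∩ {x | F.P A x = x})) : Set H) := by
    intro A hA h
    rw [h.2.2, UGrange_eq_fix (hidem A hA), IsClosed.closure_eq (UGisClosed_fix _)]
  have hONB : ∀ A, G.InG0 A →
      IsONBasisOf (B ∩ {x | F.P A x = x}) (Set.range ⇑(F.P A)) := by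
    intro A hA
    induction hA with
    | empty =>
        apply hred ∅ Ultragraph.InG0.empty
        intro x hx
        have hx0 : x = 0 := by rw [← hx, F.P_empty]; simp
        rw [hx0]
        exact subset_closure (by simp)
    | singleton v =>
        apply hred _ (Ultragraph.InG0.singleton v)
        intro x hx
        have h1 : x ∈ closure (Set.range ⇑(F.P {v})) := subset_closure ⟨x, hx⟩
        rw [← (hBv v).2.2] at h1
        have hsub : Bv v ⊆ B ∩ {y | F.P {v} y = y} := fun b hb =>
          ⟨hBvB v hb,
            UGfix_of_range (hidem _ (Ultragraph.InG0.singleton v)) ((hBv v).1 hb)⟩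
        exact closure_mono (SetLike.coe_subset_coe.mpr (Submodule.span_mono hsub)) h1
    | range e =>
        apply hred _ (Ultragraph.InG0.range e)
        intro x hx
        have h1 : x ∈ closure (Set.range ⇑(F.P (G.r e))) := subset_closure ⟨x, hx⟩
        rw [← (hBre e).2.2] at h1
        have hsub : Bre e ⊆ B ∩ {y | F.P (G.r e) y = y} := fun b hb =>
          ⟨hBreB e hb,
            UGfix_of_range (hidem _ (Ultragraph.InG0.range e)) ((hBre e).1 hb)⟩
        exact closure_mono (SetLike.coe_subset_coe.mpr (Submodule.span_mono hsub)) h1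
    | @union A₁ A₂ h1 h2 ih1 ih2 =>
        apply hred _ (h1.union h2)
        intro x hx
        set M := (Submodule.span ℂ (B ∩ {y | F.P (A₁ ∪ A₂) y = y})).topologicalClosure
          with hMdef
        have hMcoe : (↑M : Set H)
            = closure (↑(Submodule.span ℂ (B ∩ {y | F.P (A₁ ∪ A₂) y = y})) : Set H) :=
          Submodule.topologicalClosure_coe _
        have hin : ∀ A', G.InG0 A' → A' ⊆ A₁ ∪ A₂ →
            {y : H | F.P A' y = y}
              = closure (↑(Submodule.span ℂ (B ∩ {y | F.P A' y = y})) : Set H) →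
            ∀ y : H, F.P A' y = y → y ∈ M := by
          intro A' hA' hsub hcl y hy
          have hy1 : y ∈ closure (↑(Submodule.span ℂ (B ∩ {z | F.P A' z = z})) : Set H) := by
            rw [← hcl]; exact hy
          have hss : B ∩ {z | F.P A' z = z} ⊆ B ∩ {z | F.P (A₁ ∪ A₂) z = z} :=
            fun b hb => ⟨hb.1, hmono A' (A₁ ∪ A₂) hA' (h1.union h2) hsub b hb.2⟩
          have : y ∈ (↑M : Set H) := by
            rw [hMcoe]
            exact closure_mono (SetLike.coe_subset_coe.mpr (Submodule.span_mono hss)) hy1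
          exact this
        have hin1 := hin A₁ h1 Set.subset_union_left (hfix_eq A₁ h1 ih1)
        have hin2 := hin A₂ h2 Set.subset_union_right (hfix_eq A₂ h2 ih2)
        have m1 : F.P A₁ x ∈ M := hin1 _ (by rw [← ContinuousLinearMap.mul_apply, hidem A₁ h1])
        have m2 : F.P A₂ x ∈ M := hin2 _ (by rw [← ContinuousLinearMap.mul_apply, hidem A₂ h2])
        have m3 : F.P (A₁ ∩ A₂) x ∈ M := by
          have hd : F.P (A₁ ∩ A₂) x = F.P A₁ (F.P A₂ x) := by
            rw [← ContinuousLinearMap.mul_apply, F.P_mul A₁ A₂ h1 h2]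
          rw [hd]
          exact hin1 _ (by rw [← ContinuousLinearMap.mul_apply, hidem A₁ h1])
        have hxeq : x = F.P A₁ x + F.P A₂ x - F.P (A₁ ∩ A₂) x := by
          conv_lhs => rw [← hx]
          rw [F.P_union A₁ A₂ h1 h2]
          simp [ContinuousLinearMap.add_apply, ContinuousLinearMap.sub_apply]
        have hxM : x ∈ M := by
          rw [hxeq]
          exact M.sub_mem (M.add_mem m1 m2) m3
        rw [← hMcoe]
        exact hxM
    | @inter A₁ A₂ h1 h2 ih1 ih2 =>
        apply hred _ (h1.inter h2)
        intro x hx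
        have hx1 : F.P A₁ x = x :=
          hmono _ _ (h1.inter h2) h1 Set.inter_subset_left x hx
        have hx2 : F.P A₂ x = x :=
          hmono _ _ (h1.inter h2) h2 Set.inter_subset_right x hx
        have hxcl : x ∈ closure (↑(Submodule.span ℂ (B ∩ {z | F.P A₁ z = z})) : Set H) := by
          rw [← hfix_eq A₁ h1 ih1]; exact hx1
        have himg : ⇑(F.P A₂) '' (↑(Submodule.span ℂ (B ∩ {z | F.P A₁ z = z})) : Set H)
            ⊆ ↑(Submodule.span ℂ (B ∩ {z | F.P (A₁ ∩ A₂) z = z})) := by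
          rintro - ⟨y, hy, rfl⟩
          have h3 : F.P A₂ y ∈ Submodule.span ℂ (⇑(F.P A₂) '' (B ∩ {z | F.P A₁ z = z})) :=
            Submodule.apply_mem_span_image_of_mem_span ((F.P A₂ : H →L[ℂ] H) : H →ₗ[ℂ] H) (SetLike.mem_coe.mp hy)
          have h4 : ⇑(F.P A₂) '' (B ∩ {z | F.P A₁ z = z}) ⊆
              insert 0 (B ∩ {z | F.P (A₁ ∩ A₂) z = z}) := by
            rintro - ⟨b, hb, rfl⟩
            by_cases hbc : F.P A₂ b = b
            · refine Set.mem_insert_iff.mpr (Or.inr ?_)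
              rw [hbc]
              refine ⟨hb.1, ?_⟩
              show F.P (A₁ ∩ A₂) b = b
              have hd : F.P (A₁ ∩ A₂) b = F.P A₁ (F.P A₂ b) := by
                rw [← ContinuousLinearMap.mul_apply, F.P_mul A₁ A₂ h1 h2]
              rw [hd, hbc, hb.2]
            · have h0 : F.P A₂ b = 0 :=
                UGproj_zero hBo (hidem A₂ h2) (hsa A₂ h2)
                  Set.inter_subset_left ih2.2.2 hb.1 (fun hmem => hbc hmem.2)
              rw [h0]
              exact Set.mem_insert 0 _
          have h5 : Submodule.span ℂ (⇑(F.P A₂) '' (B ∩ {z | F.P A₁ z = z}))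
              ≤ Submodule.span ℂ (B ∩ {z | F.P (A₁ ∩ A₂) z = z}) := by
            calc Submodule.span ℂ (⇑(F.P A₂) '' (B ∩ {z | F.P A₁ z = z}))
                ≤ Submodule.span ℂ (insert 0 (B ∩ {z | F.P (A₁ ∩ A₂) z = z})) :=
                  Submodule.span_mono h4
              _ = Submodule.span ℂ (B ∩ {z | F.P (A₁ ∩ A₂) z = z}) :=
                  Submodule.span_insert_zero
          exact SetLike.mem_coe.mpr (h5 h3)
        have hximg : x ∈ closure
            (⇑(F.P A₂) '' (↑(Submodule.span ℂ (B ∩ {z | F.P A₁ z = z})) : Set H)) := by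
          have h6 := image_closure_subset_closure_image
            (f := ⇑(F.P A₂)) (s := (↑(Submodule.span ℂ (B ∩ {z | F.P A₁ z = z})) : Set H))
            (F.P A₂).continuous
          exact h6 ⟨x, hxcl, hx2⟩
        exact (closure_mono himg) hximg
  have hBAunion2 : ∀ A C, G.InG0 A → G.InG0 C →
      (B ∩ {x | F.P A x = x}) ∪ (B ∩ {x | F.P C x = x})
        = B ∩ {x | F.P (A ∪ C) x = x} := by
    intro A C hA hC
    ext b
    simp only [Set.mem_union, Set.mem_inter_iff, Set.mem_setOf_eq]
    constructor
    · rintro (⟨hbB, hfix⟩ | ⟨hbB, hfix⟩)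
      · exact ⟨hbB, hmono A (A ∪ C) hA (hA.union hC) Set.subset_union_left b hfix⟩
      · exact ⟨hbB, hmono C (A ∪ C) hC (hA.union hC) Set.subset_union_right b hfix⟩
    · rintro ⟨hbB, hfix⟩
      by_cases hA' : F.P A b = b
      · exact Or.inl ⟨hbB, hA'⟩
      by_cases hC' : F.P C b = b
      · exact Or.inr ⟨hbB, hC'⟩
      exfalso
      have hz1 : F.P A b = 0 :=
        UGproj_zero hBo (hidem A hA) (hsa A hA) Set.inter_subset_left
          (hONB A hA).2.2 hbB (fun h => hA' h.2)
      have hz2 : F.P C b = 0 :=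
        UGproj_zero hBo (hidem C hC) (hsa C hC) Set.inter_subset_left
          (hONB C hC).2.2 hbB (fun h => hC' h.2)
      have hz3 : F.P (A ∩ C) b = 0 := by
        have hd : F.P (A ∩ C) b = F.P A (F.P C b) := by
          rw [← ContinuousLinearMap.mul_apply, F.P_mul A C hA hC]
        rw [hd, hz2, map_zero]
      have hb0 : b = 0 := by
        rw [← hfix, F.P_union A C hA hC]
        simp [ContinuousLinearMap.add_apply, ContinuousLinearMap.sub_apply, hz1, hz2, hz3]
      have hnorm := hBo.1 ⟨b, hbB⟩
      rw [Subtype.coe_mk, hb0] at hnorm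
      simp at hnorm
  have hBAempty : B ∩ {x : H | F.P ∅ x = x} = ∅ := by
    ext b
    simp only [Set.mem_inter_iff, Set.mem_setOf_eq, Set.mem_empty_iff_false, iff_false,
      not_and]
    intro hbB hfix
    have hb0 : b = 0 := by rw [← hfix, F.P_empty]; simp
    have hnorm := hBo.1 ⟨b, hbB⟩
    rw [Subtype.coe_mk, hb0] at hnorm
    simp at hnorm
  have hbiUnion : ∀ {ι : Type} (t : Finset ι) (s : ι → Set V),
      (∀ i ∈ t, G.InG0 (s i)) →
      G.InG0 (⋃ i ∈ t, s i) ∧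
      B ∩ {x | F.P (⋃ i ∈ t, s i) x = x} = ⋃ i ∈ t, (B ∩ {x | F.P (s i) x = x}) := by
    intro ι t s
    induction t using Finset.induction_on with
    | empty =>
        intro hs
        constructor
        · simpa using Ultragraph.InG0.empty (G := G)
        · simp only [Finset.notMem_empty, Set.iUnion_of_empty, Set.iUnion_empty]
          simpa using hBAempty
    | @insert a t ha ih =>
        intro hs
        have hInG : ∀ i ∈ t, G.InG0 (s i) := fun i hi => hs i (Finset.mem_insert_of_mem hi)
        obtain ⟨hU, hEq⟩ := ih hInG
        have hsa' : G.InG0 (s a) := hs a (Finset.mem_insert_self a t)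
        constructor
        · rw [Finset.set_biUnion_insert]
          exact hsa'.union hU
        · rw [Finset.set_biUnion_insert, Finset.set_biUnion_insert,
            ← hBAunion2 _ _ hsa' hU, hEq]
  have hbiUnionV : ∀ (t : Finset V) (s : V → Set V),
      (∀ i ∈ t, G.InG0 (s i)) →
      G.InG0 (⋃ i ∈ t, s i) ∧
      B ∩ {x | F.P (⋃ i ∈ t, s i) x = x} = ⋃ i ∈ t, (B ∩ {x | F.P (s i) x = x}) := by
    intro t s
    induction t using Finset.induction_on with
    | empty =>
        intro hs
        constructor
        · simpa using Ultragraph.InG0.empty (G := G)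
        · simp only [Finset.notMem_empty, Set.iUnion_of_empty, Set.iUnion_empty]
          simpa using hBAempty
    | @insert a t ha ih =>
        intro hs
        have hInG : ∀ i ∈ t, G.InG0 (s i) := fun i hi => hs i (Finset.mem_insert_of_mem hi)
        obtain ⟨hU, hEq⟩ := ih hInG
        have hsa' : G.InG0 (s a) := hs a (Finset.mem_insert_self a t)
        constructor
        · rw [Finset.set_biUnion_insert]
          exact hsa'.union hU
        · rw [Finset.set_biUnion_insert, Finset.set_biUnion_insert,
            ← hBAunion2 _ _ hsa' hU, hEq]
  have hbiInter : ∀ (X : Finset E), X.Nonempty →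
      G.InG0 (⋂ e ∈ X, G.r e) ∧
      B ∩ {x | F.P (⋂ e ∈ X, G.r e) x = x}
        = ⋂ e ∈ X, (B ∩ {x | F.P (G.r e) x = x}) := by
    intro X hX
    induction hX using Finset.Nonempty.cons_induction with
    | singleton a =>
        constructor
        · rw [Finset.set_biInter_singleton]
          exact Ultragraph.InG0.range a
        · rw [Finset.set_biInter_singleton, Finset.set_biInter_singleton]
    | cons a t ha ht ih =>
        obtain ⟨hU, hEq⟩ := ih
        constructor
        · rw [Finset.cons_eq_insert, Finset.set_biInter_insert]
          exact (Ultragraph.InG0.range a).inter hU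
        · rw [Finset.cons_eq_insert, Finset.set_biInter_insert,
            Finset.set_biInter_insert, ← hBAinter _ _ (Ultragraph.InG0.range a) hU, hEq]
  have hBre_eq : ∀ e, Bre e = B ∩ {x | F.P (G.r e) x = x} := fun e =>
    UGbasis_unique hBo (hidem _ (Ultragraph.InG0.range e))
      (hsa _ (Ultragraph.InG0.range e)) (hBreB e) (hBre e)
  have hBv_eq : ∀ v, Bv v = B ∩ {x | F.P {v} x = x} := fun v =>
    UGbasis_unique hBo (hidem _ (Ultragraph.InG0.singleton v))
      (hsa _ (Ultragraph.InG0.singleton v)) (hBvB v) (hBv v)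
  refine ⟨fun A => B ∩ {x | F.P A x = x}, ?_, hONB, fun A C hA hC =>
    ⟨hBAinter A C hA hC, hBAunion2 A C hA hC⟩⟩
  intro A n Xs Fv hne hdec
  have hC : ∀ i : Fin n, G.InG0 (⋂ e ∈ Xs i, G.r e) := fun i => (hbiInter (Xs i) (hne i)).1
  obtain ⟨hU1, hEq1⟩ := hbiUnion Finset.univ (fun i : Fin n => ⋂ e ∈ Xs i, G.r e)
    (fun i _ => hC i)
  obtain ⟨hU2, hEq2⟩ := hbiUnionV Fv (fun v => ({v} : Set V)) (fun v _ =>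
    Ultragraph.InG0.singleton v)
  have hdec' : A = (⋃ i ∈ (Finset.univ : Finset (Fin n)), ⋂ e ∈ Xs i, G.r e)
      ∪ (⋃ v ∈ Fv, ({v} : Set V)) := by
    rw [hdec]
    congr 1
    · ext x; simp
    · ext x; simp
  have e1 : (⋃ i ∈ (Finset.univ : Finset (Fin n)),
        (B ∩ {x | F.P (⋂ e ∈ Xs i, G.r e) x = x}))
      = ⋃ i, ⋂ e ∈ Xs i, Bre e := by
    have h7 : ∀ i : Fin n, B ∩ {x | F.P (⋂ e ∈ Xs i, G.r e) x = x}
        = ⋂ e ∈ Xs i, Bre e := by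
      intro i
      rw [(hbiInter (Xs i) (hne i)).2]
      exact Set.iInter₂_congr fun e _ => (hBre_eq e).symm
    calc (⋃ i ∈ (Finset.univ : Finset (Fin n)),
          (B ∩ {x | F.P (⋂ e ∈ Xs i, G.r e) x = x}))
        = ⋃ i, (B ∩ {x | F.P (⋂ e ∈ Xs i, G.r e) x = x}) := by
          ext x; simp
      _ = ⋃ i, ⋂ e ∈ Xs i, Bre e := Set.iUnion_congr h7
  have e2 : (⋃ v ∈ Fv, (B ∩ {x | F.P ({v} : Set V) x = x})) = ⋃ v ∈ Fv, Bv v :=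
    Set.iUnion₂_congr fun v _ => (hBv_eq v).symm
  rw [hdec']
  beta_reduce
  rw [← hBAunion2 _ _ hU1 hU2, hEq1, hEq2, e1, e2]

end Ultragraph
end

section
/- Let G be an ultragraph and π : C*(G) → B(H) a permutative representation. Then π is unitarily equivalent to a representation of C*(G) on ℓ²(ℕ) induced from a G-branching system on ℕ with counting measure: setting R_e = {n : h_n ∈ B_e}, D_A = {n : h_n ∈ B_A} and defining bijections f_e : D_{r(e)} → R_e by h_{f_e(n)} = π(s_e)(h_n), where B = {h_n}_{n∈ℕ} is the distinguished basis, one obtains a G-branching system whose induced representation is unitarily equivalent to π via the unitary h_n ↦ δ_n. -/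
open MeasureTheory Filter Set
open scoped ENNReal

universe u v w

namespace Ultragraph

/-- Every permutative representation is unitarily equivalent, via `h_n ↦ δ_n`, to the
representation on `ℓ²(ℕ)` induced from a branching system on `ℕ` with counting measure. -/
theorem permutative_unitarily_equivalent_branchingSystem
    {V E : Type*} {G : Ultragraph V E} {H : Type*} [NormedAddCommGroup H]
    [InnerProductSpace ℂ H] [CompleteSpace H]
    (F : CKFamily G (H →L[ℂ] H))
    (h : ℕ → H) (hinj : Function.Injective h)
    (Bv : V → Set H) (Bre : E → Set H) (Be : E → Set H)
    (hB : IsONBasisOf (Set.range h) Set.univ)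
    (hBv : ∀ v, IsONBasisOf (Bv v) (Set.range ⇑(F.P {v})))
    (hBre : ∀ e, IsONBasisOf (Bre e) (Set.range ⇑(F.P (G.r e))))
    (hBe : ∀ e, IsONBasisOf (Be e) (Set.range ⇑(F.S e * star (F.S e))))
    (hBreB : ∀ e, Bre e ⊆ Set.range h) (hBvB : ∀ v, Bv v ⊆ Set.range h)
    (hBvBre : ∀ v e, v ∈ G.r e → Bv v ⊆ Bre e)
    (hBeBv : ∀ v, (⋃ e ∈ {e | G.s e = v}, Be e) ⊆ Bv v)
    (hB2B : ∀ e, ⇑(F.S e) '' Bre e = Be e) :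
    ∃ (BS : BranchingSystem G ℕ (Measure.count : Measure ℕ))
      (U : H ≃ₗᵢ[ℂ] lp (fun _ : ℕ => ℂ) 2),
      (∀ n, U (h n) = lp.single 2 n (1 : ℂ)) ∧
      (∀ e, BS.R e = {n | h n ∈ Be e}) ∧
      (∀ e, ∀ n ∈ BS.D (G.r e), h (BS.f e n) = F.S e (h n)) ∧
      (∀ A, G.InG0 A → ∀ (x : H) (n : ℕ),
        (U ((F.P A) x) : ∀ _ : ℕ, ℂ) n = (BS.D A).indicator (fun m => (U x : ∀ _ : ℕ, ℂ) m) n) ∧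
      ∀ (e : E) (x : H) (n : ℕ),
        (U ((F.S e) x) : ∀ _ : ℕ, ℂ) n =
          (BS.R e).indicator (fun m => (U x : ∀ _ : ℕ, ℂ) (BS.finv e m)) n := by
  classical
  -- `h` is an orthonormal family
  have hon : Orthonormal ℂ h := by
    have h1 := hB.2.1
    exact h1.comp (fun n => (⟨h n, Set.mem_range_self n⟩ : Set.range h))
      (fun a b hab => hinj (congrArg Subtype.val hab))
  have hnorm1 : ∀ n, h n ≠ 0 := by
    intro n h0
    have := hon.1 n
    rw [h0] at this; simp at this
  -- the key projection lemma: a self-adjoint idempotent whose range has an orthonormal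
  -- basis consisting of elements of the family `h` acts diagonally on `h`
  have projLem : ∀ (T : H →L[ℂ] H), star T = T → T * T = T →
      ∀ Sset : Set H, IsONBasisOf Sset (Set.range ⇑T) → Sset ⊆ Set.range h →
      ∀ n, (h n ∈ Sset → T (h n) = h n) ∧ (h n ∉ Sset → T (h n) = 0) := by
    intro T hTs hT2 Sset hONB hsub n
    constructor
    · intro hmem
      obtain ⟨y, hy⟩ := hONB.1 hmem
      have hTn : T (h n) = T (T y) := by rw [hy]
      rw [hTn, ← ContinuousLinearMap.mul_apply, hT2, hy]
    · intro hnot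
      have hS : Sset ⊆ ((ℂ ∙ (h n))ᗮ : Set H) := by
        intro x hx
        obtain ⟨m, rfl⟩ := hsub hx
        have hmn : n ≠ m := by rintro rfl; exact hnot hx
        exact Submodule.mem_orthogonal_singleton_iff_inner_right.2 (hon.2 hmn)
      have hspan : (↑(Submodule.span ℂ Sset) : Set H) ⊆ ((ℂ ∙ (h n))ᗮ : Set H) :=
        Submodule.span_le.2 hS
      have hcl : closure (↑(Submodule.span ℂ Sset) : Set H) ⊆ ((ℂ ∙ (h n))ᗮ : Set H) :=
        closure_minimal hspan (Submodule.isClosed_orthogonal _)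
      have hrange : Set.range ⇑T ⊆ ((ℂ ∙ (h n))ᗮ : Set H) := by
        intro x hx
        apply hcl
        rw [hONB.2.2]
        exact subset_closure hx
      have hin : (inner ℂ (h n) (T (h n)) : ℂ) = 0 :=
        Submodule.mem_orthogonal_singleton_iff_inner_right.1 (hrange ⟨h n, rfl⟩)
      have hadj : ContinuousLinearMap.adjoint T = T := by
        rw [← ContinuousLinearMap.star_eq_adjoint, hTs]
      have h0 : (inner ℂ (T (h n)) (T (h n)) : ℂ) = 0 := by
        calc (inner ℂ (T (h n)) (T (h n)) : ℂ)
            = inner ℂ (h n) ((ContinuousLinearMap.adjoint T) (T (h n))) :=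
              (ContinuousLinearMap.adjoint_inner_right T (h n) (T (h n))).symm
          _ = inner ℂ (h n) ((T * T) (h n)) := by
              rw [hadj, ← ContinuousLinearMap.mul_apply]
          _ = inner ℂ (h n) (T (h n)) := by rw [hT2]
          _ = 0 := hin
      exact inner_self_eq_zero.1 h0
  -- basic algebraic identities
  have hrG0 : ∀ e, G.InG0 (G.r e) := fun e => InG0.range e
  have hP2 : ∀ A, G.InG0 A → F.P A * F.P A = F.P A := fun A hA => by
    rw [F.P_mul A A hA hA, Set.inter_self]
  have hSP : ∀ e, F.S e * F.P (G.r e) = F.S e := by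
    intro e
    have expand : star (F.S e - F.S e * F.P (G.r e)) * (F.S e - F.S e * F.P (G.r e))
        = star (F.S e) * F.S e - (star (F.S e) * F.S e) * F.P (G.r e)
          - F.P (G.r e) * (star (F.S e) * F.S e)
          + F.P (G.r e) * ((star (F.S e) * F.S e) * F.P (G.r e)) := by
      rw [star_sub, star_mul, F.P_star _ (hrG0 e)]
      noncomm_ring
    have key : star (F.S e - F.S e * F.P (G.r e)) * (F.S e - F.S e * F.P (G.r e)) = 0 := by
      rw [expand, F.S_star_mul]
      simp only [hP2 _ (hrG0 e)]
      abel
    have h0 := (CStarRing.star_mul_self_eq_zero_iff _).1 key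
    have := sub_eq_zero.1 h0
    exact this.symm
  have hQstar : ∀ e, star (F.S e * star (F.S e)) = F.S e * star (F.S e) := by
    intro e; rw [star_mul, star_star]
  have hQ2 : ∀ e, (F.S e * star (F.S e)) * (F.S e * star (F.S e)) = F.S e * star (F.S e) := by
    intro e
    rw [mul_assoc, ← mul_assoc (star (F.S e)), F.S_star_mul, ← mul_assoc, hSP e]
  have hQS : ∀ e, (F.S e * star (F.S e)) * F.S e = F.S e := by
    intro e
    rw [mul_assoc, F.S_star_mul, hSP]
  have hSstarQ : ∀ e, star (F.S e) = star (F.S e) * (F.S e * star (F.S e)) := by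
    intro e
    conv_lhs => rw [← hQS e]
    rw [star_mul, hQstar e]
  have hBeB : ∀ e, Be e ⊆ Set.range h := by
    intro e x hx
    exact hBvB _ (hBeBv (G.s e) (Set.mem_biUnion (show e ∈ {e' | G.s e' = G.s e} from rfl) hx))
  -- specializations of the projection lemma
  have plV : ∀ v n, (h n ∈ Bv v → (F.P {v}) (h n) = h n) ∧ (h n ∉ Bv v → (F.P {v}) (h n) = 0) :=
    fun v => projLem (F.P {v}) (F.P_star _ (InG0.singleton v)) (hP2 _ (InG0.singleton v))
      (Bv v) (hBv v) (hBvB v)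
  have plR : ∀ e n, (h n ∈ Bre e → (F.P (G.r e)) (h n) = h n) ∧
      (h n ∉ Bre e → (F.P (G.r e)) (h n) = 0) :=
    fun e => projLem (F.P (G.r e)) (F.P_star _ (hrG0 e)) (hP2 _ (hrG0 e))
      (Bre e) (hBre e) (hBreB e)
  have plQ : ∀ e n, (h n ∈ Be e → (F.S e * star (F.S e)) (h n) = h n) ∧
      (h n ∉ Be e → (F.S e * star (F.S e)) (h n) = 0) :=
    fun e => projLem (F.S e * star (F.S e)) (hQstar e) (hQ2 e) (Be e) (hBe e) (hBeB e)
  have hDv : ∀ v n, (F.P {v}) (h n) = h n ↔ h n ∈ Bv v := by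
    intro v n
    constructor
    · intro heq; by_contra hn
      rw [(plV v n).2 hn] at heq; exact hnorm1 n heq.symm
    · exact (plV v n).1
  have hDre : ∀ e n, (F.P (G.r e)) (h n) = h n ↔ h n ∈ Bre e := by
    intro e n
    constructor
    · intro heq; by_contra hn
      rw [(plR e n).2 hn] at heq; exact hnorm1 n heq.symm
    · exact (plR e n).1
  -- dichotomy: each projection `P A` acts diagonally on the basis
  have dich : ∀ A, G.InG0 A → ∀ n, F.P A (h n) = h n ∨ F.P A (h n) = 0 := by
    intro A hA
    induction hA with
    | empty => intro n; right; rw [F.P_empty]; rfl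
    | singleton v =>
      intro n
      by_cases hm : h n ∈ Bv v
      · exact Or.inl ((plV v n).1 hm)
      · exact Or.inr ((plV v n).2 hm)
    | range e =>
      intro n
      by_cases hm : h n ∈ Bre e
      · exact Or.inl ((plR e n).1 hm)
      · exact Or.inr ((plR e n).2 hm)
    | @union A' B' hA' hB' ihA ihB =>
      intro n
      have hu : F.P (A' ∪ B') (h n) = F.P A' (h n) + F.P B' (h n) - F.P A' (F.P B' (h n)) := by
        rw [F.P_union A' B' hA' hB', ← F.P_mul A' B' hA' hB']
        simp [ContinuousLinearMap.sub_apply, ContinuousLinearMap.add_apply,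
          ContinuousLinearMap.mul_apply]
      rcases ihA n with hA1 | hA0 <;> rcases ihB n with hB1 | hB0
      · left; rw [hu, hB1, hA1]; abel
      · left; rw [hu, hB0, map_zero, hA1]; abel
      · left; rw [hu, hB1, hA0]; abel
      · right; rw [hu, hB0, map_zero, hA0]; abel
    | @inter A' B' hA' hB' ihA ihB =>
      intro n
      have hmul : F.P (A' ∩ B') (h n) = F.P A' (F.P B' (h n)) := by
        rw [← F.P_mul A' B' hA' hB']; rfl
      rcases ihB n with hB1 | hB0
      · rw [hmul, hB1]; exact ihA n
      · right; rw [hmul, hB0, map_zero]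
  -- the maps of the branching system
  let fdef : E → ℕ → ℕ := fun e n =>
    if hc : ∃ m, h m = F.S e (h n) then hc.choose else 0
  let finvdef : E → ℕ → ℕ := fun e n =>
    if hc : ∃ m, F.P (G.r e) (h m) = h m ∧ fdef e m = n then hc.choose else 0
  have hf_spec : ∀ e n, F.P (G.r e) (h n) = h n → h (fdef e n) = F.S e (h n) := by
    intro e n hn
    have hmem : h n ∈ Bre e := (hDre e n).1 hn
    have hSe : F.S e (h n) ∈ Be e := by rw [← hB2B e]; exact ⟨h n, hmem, rfl⟩
    have hex : ∃ m, h m = F.S e (h n) := by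
      obtain ⟨m, hm⟩ := hBeB e hSe; exact ⟨m, hm⟩
    rw [show fdef e n = hex.choose from dif_pos hex]
    exact hex.choose_spec
  have hf_memR : ∀ e n, F.P (G.r e) (h n) = h n → h (fdef e n) ∈ Be e := by
    intro e n hn
    rw [hf_spec e n hn, ← hB2B e]
    exact ⟨h n, (hDre e n).1 hn, rfl⟩
  have hf_inj : ∀ e n m, F.P (G.r e) (h n) = h n → F.P (G.r e) (h m) = h m →
      fdef e n = fdef e m → n = m := by
    intro e n m hn hm heq
    have h1 : F.S e (h n) = F.S e (h m) := by
      rw [← hf_spec e n hn, ← hf_spec e m hm, heq]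
    have h2 : (star (F.S e) * F.S e) (h n) = (star (F.S e) * F.S e) (h m) := by
      simp only [ContinuousLinearMap.mul_apply, h1]
    rw [F.S_star_mul] at h2
    rw [hn, hm] at h2
    exact hinj h2
  have hfinv_spec : ∀ e n, h n ∈ Be e →
      F.P (G.r e) (h (finvdef e n)) = h (finvdef e n) ∧ fdef e (finvdef e n) = n := by
    intro e n hn
    rw [← hB2B e] at hn
    obtain ⟨x, hxB, hxe⟩ := hn
    obtain ⟨m, rfl⟩ := hBreB e hxB
    have hm : F.P (G.r e) (h m) = h m := (hDre e m).2 hxB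
    have hfm : fdef e m = n := hinj (by rw [hf_spec e m hm, hxe])
    have hex : ∃ k, F.P (G.r e) (h k) = h k ∧ fdef e k = n := ⟨m, hm, hfm⟩
    rw [show finvdef e n = hex.choose from dif_pos hex]
    exact hex.choose_spec
  have hfinv_f : ∀ e n, F.P (G.r e) (h n) = h n → finvdef e (fdef e n) = n := by
    intro e n hn
    obtain ⟨hm, heq⟩ := hfinv_spec e (fdef e n) (hf_memR e n hn)
    exact hf_inj e _ n hm hn heq
  -- the Hilbert basis
  have hsp : ⊤ ≤ (Submodule.span ℂ (Set.range h)).topologicalClosure := by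
    intro x _
    have hcl : closure (↑(Submodule.span ℂ (Set.range h)) : Set H) = Set.univ := by
      rw [hB.2.2, closure_univ]
    show x ∈ closure (↑(Submodule.span ℂ (Set.range h)) : Set H)
    rw [hcl]; trivial
  let b : HilbertBasis ℕ ℂ H := HilbertBasis.mk hon hsp
  have hbn : ∀ n, b n = h n := fun n => congrFun (HilbertBasis.coe_mk hon hsp) n
  refine ⟨{
    R := fun e => {n | h n ∈ Be e}
    D := fun A => {n | F.P A (h n) = h n}
    f := fdef
    finv := finvdef
    measurableSet_R := fun _ => .of_discrete
    measurableSet_D := fun _ _ => .of_discrete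
    ae_disjoint := ?_
    D_empty := ?_
    D_inter := ?_
    D_union := ?_
    R_subset_D := ?_
    D_eq_iUnion := ?_
    measurable_f := fun _ => .of_discrete
    measurable_finv := fun _ => .of_discrete
    mapsTo_f := fun e n hn => hf_memR e n hn
    mapsTo_finv := fun e n hn => (hfinv_spec e n hn).1
    f_finv := ?_
    finv_f := ?_
    pushforward_f_ac := ?_
    pushforward_finv_ac := ?_ }, b.repr, ?_, ?_, ?_, ?_, ?_⟩
  · -- ae_disjoint
    intro e e' hne
    have hQQ : F.S e * star (F.S e) * (F.S e' * star (F.S e')) = 0 := by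
      rw [mul_assoc, ← mul_assoc (star (F.S e)), F.S_orth e e' hne, zero_mul, mul_zero]
    have hempty : ({n | h n ∈ Be e} ∩ {n | h n ∈ Be e'} : Set ℕ) = ∅ := by
      ext n
      simp only [Set.mem_inter_iff, Set.mem_setOf_eq, Set.mem_empty_iff_false, iff_false,
        not_and]
      intro h1 h2
      have q1 : (F.S e * star (F.S e)) (h n) = h n := (plQ e n).1 h1
      have q2 : (F.S e' * star (F.S e')) (h n) = h n := (plQ e' n).1 h2
      have : h n = 0 := by
        calc h n = (F.S e * star (F.S e)) ((F.S e' * star (F.S e')) (h n)) := by rw [q2, q1]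
          _ = (F.S e * star (F.S e) * (F.S e' * star (F.S e'))) (h n) := rfl
          _ = 0 := by rw [hQQ]; rfl
      exact hnorm1 n this
    rw [hempty]
    exact measure_empty
  · -- D_empty
    ext n
    simp only [F.P_empty, ContinuousLinearMap.zero_apply, Set.mem_setOf_eq,
      Set.mem_empty_iff_false, iff_false]
    exact fun hh => hnorm1 n hh.symm
  · -- D_inter
    intro A B hA hB'
    have hset : ({n | F.P A (h n) = h n} ∩ {n | F.P B (h n) = h n} : Set ℕ)
        = {n | F.P (A ∩ B) (h n) = h n} := by
      ext n
      simp only [Set.mem_inter_iff, Set.mem_setOf_eq]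
      constructor
      · rintro ⟨h1, h2⟩
        rw [← F.P_mul A B hA hB', ContinuousLinearMap.mul_apply, h2, h1]
      · intro hn
        have e1 : A ∩ (A ∩ B) = A ∩ B := by ext x; simp only [Set.mem_inter_iff]; tauto
        have e2 : B ∩ (A ∩ B) = A ∩ B := by ext x; simp only [Set.mem_inter_iff]; tauto
        have hm1 : F.P A * F.P (A ∩ B) = F.P (A ∩ B) := by
          rw [F.P_mul A (A ∩ B) hA (hA.inter hB'), e1]
        have hm2 : F.P B * F.P (A ∩ B) = F.P (A ∩ B) := by
          rw [F.P_mul B (A ∩ B) hB' (hA.inter hB'), e2]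
        constructor
        · have step1 : F.P A (h n) = (F.P A * F.P (A ∩ B)) (h n) := by
            rw [ContinuousLinearMap.mul_apply, hn]
          rw [step1, hm1, hn]
        · have step1 : F.P B (h n) = (F.P B * F.P (A ∩ B)) (h n) := by
            rw [ContinuousLinearMap.mul_apply, hn]
          rw [step1, hm2, hn]
    rw [hset]
    exact Filter.EventuallyEq.rfl
  · -- D_union
    intro A B hA hB'
    have hu : ∀ n, F.P (A ∪ B) (h n) = F.P A (h n) + F.P B (h n) - F.P A (F.P B (h n)) := by
      intro n
      rw [F.P_union A B hA hB', ← F.P_mul A B hA hB']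
      simp [ContinuousLinearMap.sub_apply, ContinuousLinearMap.add_apply,
        ContinuousLinearMap.mul_apply]
    have hset : ({n | F.P A (h n) = h n} ∪ {n | F.P B (h n) = h n} : Set ℕ)
        = {n | F.P (A ∪ B) (h n) = h n} := by
      ext n
      simp only [Set.mem_union, Set.mem_setOf_eq]
      constructor
      · intro hor
        rcases hor with h1 | h1
        · rcases dich B hB' n with h2 | h2
          · rw [hu n, h2, h1]; abel
          · rw [hu n, h2, map_zero, h1]; abel
        · rcases dich A hA n with h2 | h2
          · rw [hu n, h1, h2]; abel
          · rw [hu n, h1, h2]; abel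
      · intro hn
        rcases dich A hA n with h1 | h1
        · exact Or.inl h1
        · rcases dich B hB' n with h2 | h2
          · exact Or.inr h2
          · exfalso
            rw [hu n, h1, h2, map_zero] at hn
            simp only [add_zero, sub_zero, zero_add] at hn
            exact hnorm1 n hn.symm
    rw [hset]
    exact Filter.EventuallyEq.rfl
  · -- R_subset_D
    intro e
    have hempty : ({n | h n ∈ Be e} \ {n | F.P {G.s e} (h n) = h n} : Set ℕ) = ∅ :=
      Set.diff_eq_empty.2 (fun n hbe => (hDv (G.s e) n).2
        (hBeBv (G.s e) (Set.mem_biUnion (show e ∈ {e' | G.s e' = G.s e} from rfl) hbe)))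
    rw [hempty]
    exact measure_empty
  · -- D_eq_iUnion
    intro v hfin hnonempty
    have hset : ({n | F.P {v} (h n) = h n} : Set ℕ)
        = ⋃ e ∈ {e | G.s e = v}, {n | h n ∈ Be e} := by
      ext n
      simp only [Set.mem_setOf_eq, Set.mem_iUnion, exists_prop]
      constructor
      · intro hp
        by_contra hc
        push_neg at hc
        have h0 : F.P {v} (h n) = 0 := by
          rw [F.CK v hfin hnonempty, ContinuousLinearMap.sum_apply]
          apply Finset.sum_eq_zero
          intro e he
          have hsv : G.s e = v := (Set.Finite.mem_toFinset hfin).1 he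
          exact (plQ e n).2 (hc e hsv)
        rw [h0] at hp
        exact hnorm1 n hp.symm
      · rintro ⟨e, hsv, hbe⟩
        exact (hDv v n).2 (hBeBv v (Set.mem_biUnion hsv hbe))
    beta_reduce
    rw [hset]
    exact Filter.EventuallyEq.rfl
  · -- f_finv
    intro e
    rw [MeasureTheory.ae_restrict_iff' .of_discrete]
    exact MeasureTheory.ae_of_all _ (fun n hn => (hfinv_spec e n hn).2)
  · -- finv_f
    intro e
    rw [MeasureTheory.ae_restrict_iff' .of_discrete]
    exact MeasureTheory.ae_of_all _ (fun n hn => hfinv_f e n hn)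
  · -- pushforward_f_ac
    intro e s hs
    rw [Measure.restrict_apply .of_discrete, Measure.count_eq_zero_iff] at hs
    rw [Measure.map_apply .of_discrete .of_discrete, Measure.restrict_apply .of_discrete,
      Measure.count_eq_zero_iff]
    ext n
    simp only [Set.mem_inter_iff, Set.mem_preimage, Set.mem_setOf_eq,
      Set.mem_empty_iff_false, iff_false, not_and]
    intro hns hnR
    exact (Set.eq_empty_iff_forall_notMem.1 hs (finvdef e n)) ⟨hns, (hfinv_spec e n hnR).1⟩
  · -- pushforward_finv_ac
    intro e s hs
    rw [Measure.restrict_apply .of_discrete, Measure.count_eq_zero_iff] at hs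
    rw [Measure.map_apply .of_discrete .of_discrete, Measure.restrict_apply .of_discrete,
      Measure.count_eq_zero_iff]
    ext n
    simp only [Set.mem_inter_iff, Set.mem_preimage, Set.mem_setOf_eq,
      Set.mem_empty_iff_false, iff_false, not_and]
    intro hns hnD
    exact (Set.eq_empty_iff_forall_notMem.1 hs (fdef e n)) ⟨hns, hf_memR e n hnD⟩
  · -- U (h n) = lp.single
    intro n
    rw [show h n = b n from (hbn n).symm]
    exact HilbertBasis.repr_self b n
  · -- R e description
    intro e; rfl
  · -- intertwining of f
    intro e n hn
    exact hf_spec e n hn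
  · -- P acts as indicator
    intro A hA x n
    have hrepr : (b.repr (F.P A x) : ∀ _ : ℕ, ℂ) n = inner ℂ (b n) (F.P A x) :=
      b.repr_apply_apply (F.P A x) n
    have hreprx : (b.repr x : ∀ _ : ℕ, ℂ) n = inner ℂ (b n) x := b.repr_apply_apply x n
    have hPadj : (inner ℂ (h n) (F.P A x) : ℂ) = inner ℂ (F.P A (h n)) x := by
      calc (inner ℂ (h n) (F.P A x) : ℂ)
          = inner ℂ ((ContinuousLinearMap.adjoint (F.P A)) (h n)) x :=
            (ContinuousLinearMap.adjoint_inner_left (F.P A) x (h n)).symm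
        _ = inner ℂ (F.P A (h n)) x := by
            rw [← ContinuousLinearMap.star_eq_adjoint, F.P_star A hA]
    by_cases hm : n ∈ {n | F.P A (h n) = h n}
    · rw [Set.indicator_of_mem hm, hrepr, hbn, hPadj, hm, hreprx, hbn]
    · rw [Set.indicator_of_notMem hm, hrepr, hbn, hPadj]
      have h0 : F.P A (h n) = 0 := (dich A hA n).resolve_left hm
      rw [h0, inner_zero_left]
  · -- S acts via finv
    intro e x n
    have hrepr : (b.repr (F.S e x) : ∀ _ : ℕ, ℂ) n = inner ℂ (b n) (F.S e x) :=
      b.repr_apply_apply (F.S e x) n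
    have hSadj : (inner ℂ (h n) (F.S e x) : ℂ) = inner ℂ ((star (F.S e)) (h n)) x := by
      calc (inner ℂ (h n) (F.S e x) : ℂ)
          = inner ℂ ((ContinuousLinearMap.adjoint (F.S e)) (h n)) x :=
            (ContinuousLinearMap.adjoint_inner_left (F.S e) x (h n)).symm
        _ = inner ℂ ((star (F.S e)) (h n)) x := by
            rw [← ContinuousLinearMap.star_eq_adjoint]
    by_cases hm : n ∈ {n | h n ∈ Be e}
    · rw [Set.indicator_of_mem hm, hrepr, hbn, hSadj]
      obtain ⟨hmem, hfe⟩ := hfinv_spec e n hm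
      have h1 : h n = F.S e (h (finvdef e n)) := by rw [← hf_spec e _ hmem, hfe]
      have hreprx : (b.repr x : ∀ _ : ℕ, ℂ) (finvdef e n) = inner ℂ (b (finvdef e n)) x :=
        b.repr_apply_apply x (finvdef e n)
      rw [hreprx, hbn]
      calc (inner ℂ ((star (F.S e)) (h n)) x : ℂ)
          = inner ℂ ((star (F.S e)) (F.S e (h (finvdef e n)))) x := by rw [← h1]
        _ = inner ℂ ((star (F.S e) * F.S e) (h (finvdef e n))) x := rfl
        _ = inner ℂ (F.P (G.r e) (h (finvdef e n))) x := by rw [F.S_star_mul]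
        _ = inner ℂ (h (finvdef e n)) x := by rw [hmem]
    · rw [Set.indicator_of_notMem hm, hrepr, hbn, hSadj]
      have h0 : (star (F.S e)) (h n) = 0 := by
        conv_lhs => rw [hSstarQ e]
        rw [ContinuousLinearMap.mul_apply, (plQ e n).2 hm, map_zero]
      rw [h0, inner_zero_left]

end Ultragraph
end
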